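/- arXiv:2310.03853 — 2 statements merged into one kernel-verified Lean document; each statement's English description precedes it below -/
import Mathlib

section
/- Let X be a measurable space equipped with a sigma-finite measure lambda, V : X -> [1,infinity) measurable, and let g be a balancing function that is twice differentiable and non-decreasing with g' and g'' bounded. Let q be a bounded positive proposal density, and let mu, nu be probability measures with everywhere positive bounded densities with respect to lambda satisfying ∫ V dmu < infinity and ∫ V dnu < infinity. Fix x in X and let f be measurable with ||f||_V < infinity. Then the map t |-> P_{mu_t}(x,f), where P_{mu_t} is the Hastings kernel with invariant distribution mu_t, has right derivative at t = 0 equal to ∫ (nu(y) - mu(y)) (f(y) - f(x)) g'(r_mu(x,y)) q(y,x) / mu(x) lambda(dy) - (nu(x) - mu(x)) * (1/mu(x)^2) * ∫ (f(z) - f(x)) q(z,x) g'(r_mu(x,z)) mu(z) lambda(dz). -/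
open MeasureTheory ProbabilityTheory
open Filter Topology

/-- The Hastings ratio `r_μ(x,y) = μ(y)q(y,x) / (μ(x)q(x,y))` for a target density `p`. -/
noncomputable def hastingsRatio {X : Type*} (q : X → X → ℝ) (p : X → ℝ) (x y : X) : ℝ :=
  p y * q y x / (p x * q x y)

/-- The Hastings kernel with balancing function `g`, proposal density `q` and invariant
density `p`, applied to starting point `x` and test function `f`. -/
noncomputable def hastingsKernelFun {X : Type*} [MeasurableSpace X] (lam : Measure X)
    (g : ℝ → ℝ) (q : X → X → ℝ) (p : X → ℝ) (x : X) (f : X → ℝ) : ℝ :=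
  (∫ y, f y * g (hastingsRatio q p x y) * q x y ∂lam)
    + f x * (1 - ∫ y, g (hastingsRatio q p x y) * q x y ∂lam)

section aux
private lemma meas_comp_pos {g : ℝ → ℝ} (hg : ∀ u : ℝ, 0 < u → ContinuousAt g u)
    {X : Type*} [MeasurableSpace X] {r : X → ℝ} (hr : Measurable r) (hpos : ∀ y, 0 < r y) :
    Measurable fun y => g (r y) := by
  have hge : Continuous fun u : ℝ => g (Real.exp u) :=
    continuous_iff_continuousAt.2 fun u =>
      (hg _ (Real.exp_pos u)).comp Real.continuous_exp.continuousAt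
  have h : (fun y => g (r y)) = fun y => (fun u => g (Real.exp u)) (Real.log (r y)) := by
    funext y; simp [Real.exp_log (hpos y)]
  rw [h]
  exact hge.measurable.comp (Real.measurable_log.comp hr)

private lemma mvt_abs {g g' : ℝ → ℝ} (hg' : ∀ u : ℝ, 0 < u → HasDerivAt g (g' u) u)
    {c : ℝ} (hc : ∀ u : ℝ, 0 < u → |g' u| ≤ c) {a b : ℝ} (ha : 0 < a) (hb : 0 < b) :
    |g b - g a| ≤ c * |b - a| := by
  have := Convex.norm_image_sub_le_of_norm_hasDerivWithin_le (f := g) (f' := g')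
    (s := Set.Ioi (0:ℝ)) (fun u hu => (hg' u (Set.mem_Ioi.1 hu)).hasDerivWithinAt)
    (fun u hu => by simpa [Real.norm_eq_abs] using hc u (Set.mem_Ioi.1 hu)) (convex_Ioi 0) ha hb
  simpa [Real.norm_eq_abs] using this

private lemma convex_pos {a b t : ℝ} (ha : 0 < a) (hb : 0 < b) (h0 : 0 ≤ t) (h1 : t ≤ 1) :
    0 < (1 - t) * a + t * b := by
  rcases le_total a b with h | h
  · nlinarith
  · nlinarith

private lemma convex_le {a b t : ℝ} (ha : 0 ≤ a) (hb : 0 ≤ b) (h0 : 0 ≤ t) (h1 : t ≤ 1) :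
    (1 - t) * a + t * b ≤ a + b := by nlinarith

private lemma convex_ge_min {a b t : ℝ} (h0 : 0 ≤ t) (h1 : t ≤ 1) :
    min a b ≤ (1 - t) * a + t * b := by
  nlinarith [min_le_left a b, min_le_right a b]

private lemma calc_id {a c t e u v P w : ℝ} (ht : t ≠ 0) (hv : v ≠ 0) (hP : P ≠ 0)
    (hw : w ≠ 0) :
    a * (c * (t * (e * u) / (v * (P * w)))) * v / t = a * (c * u) * e / (P * w) := by
  field_simp

private lemma prod3_div_le {a b c d a' b' c' d' : ℝ}
    (ha : 0 ≤ a) (hb : 0 ≤ b) (hc : 0 ≤ c)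
    (haa : a ≤ a') (hbb : b ≤ b') (hcc : c ≤ c')
    (hd : 0 < d') (hdd : d' ≤ d) :
    a * b * c / d ≤ a' * b' * c' / d' := by
  have ha' : 0 ≤ a' := ha.trans haa
  have hb' : 0 ≤ b' := hb.trans hbb
  have hc' : 0 ≤ c' := hc.trans hcc
  exact div_le_div₀ (by positivity)
    (mul_le_mul (mul_le_mul haa hbb hb ha') hcc hc (mul_nonneg ha' hb')) hd hdd
end aux


set_option maxHeartbeats 1000000 in
/-- **Derivative in the invariant distribution of Hastings kernels (point-mass case).**
Under the same assumptions on `g`, `q`, `μ = pμ·λ`, `ν = pν·λ` as in the density case,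
for fixed `x` and `f` with `‖f‖_V < ∞`, the map `t ↦ P_{μ_t}(x, f)` has right derivative
at `t = 0` equal to
`∫ (pν(y)-pμ(y)) (f(y)-f(x)) g'(r_μ(x,y)) q(y,x) / pμ(x) λ(dy)
  - (pν(x)-pμ(x)) (1/pμ(x)²) ∫ (f(z)-f(x)) q(z,x) g'(r_μ(x,z)) pμ(z) λ(dz)`,
exhibiting the density part and the singular part of the derivative. -/
theorem stmt_6 {X : Type*} [MeasurableSpace X]
    (lam : Measure X) [SigmaFinite lam]
    (V : X → ℝ) (hVm : Measurable V) (hV1 : ∀ x, 1 ≤ V x)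
    (g g' g'' : ℝ → ℝ)
    (hgpos : ∀ u : ℝ, 0 < u → 0 < g u ∧ g u ≤ 1)
    (hgbal : ∀ u : ℝ, 0 < u → g u = u * g (1 / u))
    (hgmono : MonotoneOn g (Set.Ioi 0))
    (hg' : ∀ u : ℝ, 0 < u → HasDerivAt g (g' u) u)
    (hg'' : ∀ u : ℝ, 0 < u → HasDerivAt g' (g'' u) u)
    (hg'b : ∃ c, ∀ u : ℝ, 0 < u → |g' u| ≤ c)
    (hg''b : ∃ c, ∀ u : ℝ, 0 < u → |g'' u| ≤ c)
    (q : X → X → ℝ) (hqm : Measurable (Function.uncurry q))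
    (hqpos : ∀ x y, 0 < q x y) (hqb : ∃ c, ∀ x y, q x y ≤ c)
    (hqint : ∀ x, ∫ y, q x y ∂lam = 1)
    (pμ pν : X → ℝ) (hpμm : Measurable pμ) (hpνm : Measurable pν)
    (hpμpos : ∀ x, 0 < pμ x) (hpνpos : ∀ x, 0 < pν x)
    (hpμb : ∃ c, ∀ x, pμ x ≤ c) (hpνb : ∃ c, ∀ x, pν x ≤ c)
    (hμprob : IsProbabilityMeasure (lam.withDensity fun x => ENNReal.ofReal (pμ x)))
    (hνprob : IsProbabilityMeasure (lam.withDensity fun x => ENNReal.ofReal (pν x)))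
    (hVμ : Integrable (fun x => V x * pμ x) lam)
    (hVν : Integrable (fun x => V x * pν x) lam)
    (x : X)
    (f : X → ℝ) (hfm : Measurable f) (hfV : ∃ c, ∀ y, |f y| ≤ c * V y) :
    HasDerivWithinAt
      (fun t => hastingsKernelFun lam g q (fun y => (1 - t) * pμ y + t * pν y) x f)
      ((∫ y, (pν y - pμ y) * (f y - f x) * g' (hastingsRatio q pμ x y) * q y x / pμ x ∂lam)
        - (pν x - pμ x) * (1 / pμ x ^ 2) *
            ∫ z, (f z - f x) * q z x * g' (hastingsRatio q pμ x z) * pμ z ∂lam)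
      (Set.Ici 0) 0 := by
  classical
  obtain ⟨cg, hcg⟩ := hg'b
  obtain ⟨cq, hcq⟩ := hqb
  obtain ⟨cf, hcf⟩ := hfV
  have hcg0 : 0 ≤ cg := (abs_nonneg _).trans (hcg 1 one_pos)
  have hcq0 : 0 < cq := lt_of_lt_of_le (hqpos x x) (hcq x x)
  have hcf0 : 0 ≤ cf := by nlinarith [hcf x, abs_nonneg (f x), hV1 x]
  set cfx : ℝ := cf + |f x| with hcfx_def
  have hcfx0 : 0 ≤ cfx := by positivity
  have hfyx : ∀ y, |f y - f x| ≤ cfx * V y := by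
    intro y
    calc |f y - f x| ≤ |f y| + |f x| := abs_sub (f y) (f x)
      _ ≤ cf * V y + |f x| * V y := by nlinarith [hcf y, hV1 y, abs_nonneg (f x)]
      _ = cfx * V y := by ring
  set m : ℝ := min (pμ x) (pν x) with hm_def
  have hm : 0 < m := lt_min (hpμpos x) (hpνpos x)
  set Mx : ℝ := max (pμ x) (pν x) with hMx_def
  have hMx : 0 < Mx := lt_of_lt_of_le (hpμpos x) (le_max_left _ _)
  -- g u ≤ u
  have hgle : ∀ u : ℝ, 0 < u → g u ≤ u := by
    intro u hu
    rw [hgbal u hu]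
    calc u * g (1/u) ≤ u * 1 := by
          have := (hgpos (1/u) (by positivity)).2
          nlinarith
      _ = u := mul_one u
  -- basic positivity of mixtures and ratios
  have hppos : ∀ t ∈ Set.Icc (0:ℝ) 1, ∀ z, 0 < (1 - t) * pμ z + t * pν z :=
    fun t ht z => convex_pos (hpμpos z) (hpνpos z) ht.1 ht.2
  have hple : ∀ t ∈ Set.Icc (0:ℝ) 1, ∀ z, (1 - t) * pμ z + t * pν z ≤ pμ z + pν z :=
    fun t ht z => convex_le (hpμpos z).le (hpνpos z).le ht.1 ht.2
  have hpm : ∀ t ∈ Set.Icc (0:ℝ) 1, m ≤ (1 - t) * pμ x + t * pν x :=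
    fun t ht => convex_ge_min ht.1 ht.2
  have hrpos : ∀ t ∈ Set.Icc (0:ℝ) 1, ∀ y,
      0 < hastingsRatio q (fun z => (1 - t) * pμ z + t * pν z) x y := by
    intro t ht y
    exact div_pos (mul_pos (hppos t ht y) (hqpos y x)) (mul_pos (hppos t ht x) (hqpos x y))
  have hr0pos : ∀ y, 0 < hastingsRatio q pμ x y := fun y =>
    div_pos (mul_pos (hpμpos y) (hqpos y x)) (mul_pos (hpμpos x) (hqpos x y))
  have hr00 : ∀ y, hastingsRatio q (fun z => (1 - (0:ℝ)) * pμ z + 0 * pν z) x y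
      = hastingsRatio q pμ x y := by
    intro y; simp [hastingsRatio]
  -- measurability
  have hq1 : Measurable fun y => q x y := hqm.comp measurable_prodMk_left
  have hq2 : Measurable fun y => q y x := hqm.comp (measurable_id.prodMk measurable_const)
  have hrmeas : ∀ t : ℝ, Measurable fun y =>
      hastingsRatio q (fun z => (1 - t) * pμ z + t * pν z) x y := by
    intro t
    exact ((((hpμm.const_mul (1 - t)).add (hpνm.const_mul t)).mul hq2).div
      (measurable_const.mul hq1))
  have hr0meas : Measurable fun y => hastingsRatio q pμ x y :=
    (hpμm.mul hq2).div (measurable_const.mul hq1)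
  have hgc : ∀ u : ℝ, 0 < u → ContinuousAt g u := fun u hu => (hg' u hu).continuousAt
  have hg'c : ∀ u : ℝ, 0 < u → ContinuousAt g' u := fun u hu => (hg'' u hu).continuousAt
  have hgrmeas : ∀ t ∈ Set.Icc (0:ℝ) 1, Measurable fun y =>
      g (hastingsRatio q (fun z => (1 - t) * pμ z + t * pν z) x y) :=
    fun t ht => meas_comp_pos hgc (hrmeas t) (hrpos t ht)
  have hg'r0meas : Measurable fun y => g' (hastingsRatio q pμ x y) :=
    meas_comp_pos hg'c hr0meas hr0pos
  -- integrable dominating function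
  have hW : Integrable (fun y => V y * (pμ y + pν y)) lam := by
    refine (hVμ.add hVν).congr (Filter.Eventually.of_forall fun y => ?_)
    simp [mul_add]
  have hqI : Integrable (fun y => q x y) lam := by
    by_contra h
    have h1 := hqint x
    rw [integral_undef h] at h1
    norm_num at h1
  -- key pointwise bound : g(r_t) * q x y ≤ (pμ y + pν y) * cq / m
  have hgrq_le : ∀ t ∈ Set.Icc (0:ℝ) 1, ∀ y,
      g (hastingsRatio q (fun z => (1 - t) * pμ z + t * pν z) x y) * q x y
        ≤ (pμ y + pν y) * cq / m := by
    intro t ht y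
    have h1 : g (hastingsRatio q (fun z => (1 - t) * pμ z + t * pν z) x y) * q x y
        ≤ hastingsRatio q (fun z => (1 - t) * pμ z + t * pν z) x y * q x y :=
      mul_le_mul_of_nonneg_right (hgle _ (hrpos t ht y)) (hqpos x y).le
    have h2 : hastingsRatio q (fun z => (1 - t) * pμ z + t * pν z) x y * q x y
        = ((1 - t) * pμ y + t * pν y) * q y x / ((1 - t) * pμ x + t * pν x) := by
      rw [hastingsRatio, div_mul_eq_mul_div, mul_div_mul_right _ _ (hqpos x y).ne']
    refine h1.trans ?_
    rw [h2]
    have hpy0 : (0:ℝ) ≤ pμ y + pν y := by nlinarith [hpμpos y, hpνpos y]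
    refine div_le_div₀ (mul_nonneg hpy0 hcq0.le) ?_ hm (hpm t ht)
    exact mul_le_mul (hple t ht y) (hcq y x) (hqpos y x).le hpy0
  -- integrability of the main integrand
  have hψ : ∀ t ∈ Set.Icc (0:ℝ) 1, Integrable (fun y =>
      (f y - f x) * g (hastingsRatio q (fun z => (1 - t) * pμ z + t * pν z) x y) * q x y) lam := by
    intro t ht
    refine Integrable.mono' (g := fun y => (cfx * cq / m) * (V y * (pμ y + pν y)))
      (hW.const_mul _) ?_ ?_
    · exact (((hfm.sub measurable_const).mul (hgrmeas t ht)).mul hq1).aestronglyMeasurable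
    · refine Filter.Eventually.of_forall fun y => ?_
      have hg01 := hgpos _ (hrpos t ht y)
      have hb := hgrq_le t ht y
      have hb0 : 0 ≤ g (hastingsRatio q (fun z => (1 - t) * pμ z + t * pν z) x y) * q x y :=
        mul_nonneg hg01.1.le (hqpos x y).le
      calc ‖(f y - f x) * g (hastingsRatio q (fun z => (1 - t) * pμ z + t * pν z) x y) * q x y‖
          = |f y - f x| * (g (hastingsRatio q (fun z => (1 - t) * pμ z + t * pν z) x y) * q x y)
            := by rw [Real.norm_eq_abs, abs_mul, abs_mul, mul_assoc,
                abs_of_nonneg hg01.1.le, abs_of_nonneg (hqpos x y).le]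
        _ ≤ (cfx * V y) * ((pμ y + pν y) * cq / m) :=
            mul_le_mul (hfyx y) hb hb0 (mul_nonneg hcfx0 ((zero_le_one).trans (hV1 y)))
        _ = (cfx * cq / m) * (V y * (pμ y + pν y)) := by field_simp
  have hgq : ∀ t ∈ Set.Icc (0:ℝ) 1, Integrable (fun y =>
      g (hastingsRatio q (fun z => (1 - t) * pμ z + t * pν z) x y) * q x y) lam := by
    intro t ht
    refine Integrable.mono' hqI ((hgrmeas t ht).mul hq1).aestronglyMeasurable ?_
    refine Filter.Eventually.of_forall fun y => ?_
    have hg01 := hgpos _ (hrpos t ht y)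
    rw [Real.norm_eq_abs, abs_mul, abs_of_nonneg hg01.1.le, abs_of_nonneg (hqpos x y).le]
    nlinarith [hqpos x y, hg01.1, hg01.2]
  -- rewriting the kernel
  have hkernel : ∀ t ∈ Set.Icc (0:ℝ) 1,
      hastingsKernelFun lam g q (fun z => (1 - t) * pμ z + t * pν z) x f
        = f x + ∫ y, (f y - f x) *
            g (hastingsRatio q (fun z => (1 - t) * pμ z + t * pν z) x y) * q x y ∂lam := by
    intro t ht
    have e2 : (∫ y, f y * g (hastingsRatio q (fun z => (1 - t) * pμ z + t * pν z) x y)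
        * q x y ∂lam)
        = (∫ y, (f y - f x) * g (hastingsRatio q (fun z => (1 - t) * pμ z + t * pν z) x y)
            * q x y ∂lam)
          + f x * ∫ y, g (hastingsRatio q (fun z => (1 - t) * pμ z + t * pν z) x y)
            * q x y ∂lam := by
      rw [← integral_const_mul, ← integral_add (hψ t ht) ((hgq t ht).const_mul (f x))]
      congr 1
      funext y
      ring
    rw [hastingsKernelFun, e2]
    ring
  -- clean integrand for the limit
  set L : X → ℝ := fun y => (f y - f x) * q x y * (g' (hastingsRatio q pμ x y) *
      ((pν y * pμ x - pμ y * pν x) * q y x / (pμ x ^ 2 * q x y))) with hL_def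
  -- integrability of the two parts of the stated derivative
  have habsμν : ∀ y, |pν y - pμ y| ≤ pμ y + pν y := by
    intro y
    have h1 : |pν y - pμ y| ≤ |pν y| + |pμ y| := abs_sub (pν y) (pμ y)
    rw [abs_of_pos (hpνpos y), abs_of_pos (hpμpos y)] at h1
    linarith
  have hA' : Integrable (fun y =>
      (pν y - pμ y) * (f y - f x) * g' (hastingsRatio q pμ x y) * q y x / pμ x) lam := by
    refine Integrable.mono' (g := fun y => ((cfx * cg * cq) / pμ x) * (V y * (pμ y + pν y)))
      (hW.const_mul _) ?_ ?_
    · exact ((((hpνm.sub hpμm).mul (hfm.sub measurable_const)).mul hg'r0meas).mul hq2).div_const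
        (pμ x) |>.aestronglyMeasurable
    · refine Filter.Eventually.of_forall fun y => ?_
      have he : ‖(pν y - pμ y) * (f y - f x) * g' (hastingsRatio q pμ x y) * q y x / pμ x‖
          = |pν y - pμ y| * |f y - f x| * |g' (hastingsRatio q pμ x y)| * q y x / pμ x := by
        rw [Real.norm_eq_abs, abs_div, abs_mul, abs_mul, abs_mul,
          abs_of_pos (hqpos y x), abs_of_pos (hpμpos x)]
      rw [he]
      have h3 := prod3_div_le (a := |pν y - pμ y| * |f y - f x|)
        (b := |g' (hastingsRatio q pμ x y)|) (c := q y x)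
        (a' := (pμ y + pν y) * (cfx * V y)) (b' := cg) (c' := cq)
        (d := pμ x) (d' := pμ x)
        (mul_nonneg (abs_nonneg _) (abs_nonneg _)) (abs_nonneg _) (hqpos y x).le
        (mul_le_mul (habsμν y) (hfyx y) (abs_nonneg _)
          (by nlinarith [hpμpos y, hpνpos y]))
        (hcg _ (hr0pos y)) (hcq y x) (hpμpos x) le_rfl
      refine h3.trans ?_
      show (pμ y + pν y) * (cfx * V y) * cg * cq / pμ x
          ≤ cfx * cg * cq / pμ x * (V y * (pμ y + pν y))
      exact le_of_eq (by ring)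
  have hB' : Integrable (fun z =>
      (f z - f x) * q z x * g' (hastingsRatio q pμ x z) * pμ z) lam := by
    refine Integrable.mono' (g := fun z => (cfx * cq * cg) * (V z * (pμ z + pν z)))
      (hW.const_mul _) ?_ ?_
    · exact ((((hfm.sub measurable_const).mul hq2).mul hg'r0meas).mul hpμm).aestronglyMeasurable
    · refine Filter.Eventually.of_forall fun z => ?_
      have he : ‖(f z - f x) * q z x * g' (hastingsRatio q pμ x z) * pμ z‖
          = (|f z - f x| * q z x) * |g' (hastingsRatio q pμ x z)| * pμ z := by
        rw [Real.norm_eq_abs, abs_mul, abs_mul, abs_mul,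
          abs_of_pos (hqpos z x), abs_of_pos (hpμpos z)]
      rw [he]
      have h3 := prod3_div_le (a := |f z - f x| * q z x)
        (b := |g' (hastingsRatio q pμ x z)|) (c := pμ z)
        (a' := cfx * V z * cq) (b' := cg) (c' := pμ z + pν z) (d := 1) (d' := 1)
        (mul_nonneg (abs_nonneg _) (hqpos z x).le) (abs_nonneg _) (hpμpos z).le
        (mul_le_mul (hfyx z) (hcq z x) (hqpos z x).le
          (mul_nonneg hcfx0 ((zero_le_one).trans (hV1 z))))
        (hcg _ (hr0pos z)) (by nlinarith [hpνpos z]) one_pos le_rfl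
      simp only [div_one] at h3
      refine h3.trans ?_
      show cfx * V z * cq * cg * (pμ z + pν z) ≤ cfx * cq * cg * (V z * (pμ z + pν z))
      exact le_of_eq (by ring)
  -- the stated derivative equals ∫ L
  have hD : ((∫ y, (pν y - pμ y) * (f y - f x) * g' (hastingsRatio q pμ x y) * q y x / pμ x ∂lam)
        - (pν x - pμ x) * (1 / pμ x ^ 2) *
            ∫ z, (f z - f x) * q z x * g' (hastingsRatio q pμ x z) * pμ z ∂lam)
      = ∫ y, L y ∂lam := by
    rw [← integral_const_mul, ← integral_sub hA' (hB'.const_mul _)]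
    refine integral_congr_ae (Filter.Eventually.of_forall fun y => ?_)
    simp only [hL_def]
    have h1 : pμ x ≠ 0 := (hpμpos x).ne'
    have h2 : q x y ≠ 0 := (hqpos x y).ne'
    field_simp
    ring
  rw [hD]
  -- integrability of the t = 0 integrand
  have hψμ : Integrable (fun y =>
      (f y - f x) * g (hastingsRatio q pμ x y) * q x y) lam := by
    have h9 := hψ 0 ⟨le_rfl, zero_le_one⟩
    simpa only [hr00] using h9
  -- (1) eventually in the right-filter, t ∈ (0,1]
  have hev : ∀ᶠ t in nhdsWithin (0:ℝ) (Set.Ici 0 \ {0}), t ∈ Set.Ioc (0:ℝ) 1 := by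
    have h1 : Set.Iio (1:ℝ) ∈ nhdsWithin (0:ℝ) (Set.Ici 0 \ {0}) :=
      mem_nhdsWithin_of_mem_nhds (Iio_mem_nhds one_pos)
    filter_upwards [h1, self_mem_nhdsWithin] with t h1t h2t
    refine ⟨h2t.1.lt_of_ne' ?_, le_of_lt h1t⟩
    intro h
    exact h2t.2 (by simp [h])
  -- (2) pointwise limits
  have hlimφ : ∀ y, Filter.Tendsto (fun t =>
      (f y - f x) * (g (hastingsRatio q (fun z => (1 - t) * pμ z + t * pν z) x y)
        - g (hastingsRatio q pμ x y)) * q x y / t)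
      (nhdsWithin (0:ℝ) (Set.Ici 0 \ {0})) (𝓝 (L y)) := by
    intro y
    have hNum : HasDerivAt (fun t : ℝ => ((1 - t) * pμ y + t * pν y) * q y x)
        ((pν y - pμ y) * q y x) 0 := by
      have h1 : HasDerivAt (fun t : ℝ => (1 - t) * pμ y + t * pν y) (pν y - pμ y) 0 := by
        have h2 := (((hasDerivAt_id (0:ℝ)).const_sub 1).mul_const (pμ y)).add
          ((hasDerivAt_id (0:ℝ)).mul_const (pν y))
        refine h2.congr_deriv ?_
        ring
      exact h1.mul_const (q y x)
    have hDen : HasDerivAt (fun t : ℝ => ((1 - t) * pμ x + t * pν x) * q x y)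
        ((pν x - pμ x) * q x y) 0 := by
      have h1 : HasDerivAt (fun t : ℝ => (1 - t) * pμ x + t * pν x) (pν x - pμ x) 0 := by
        have h2 := (((hasDerivAt_id (0:ℝ)).const_sub 1).mul_const (pμ x)).add
          ((hasDerivAt_id (0:ℝ)).mul_const (pν x))
        refine h2.congr_deriv ?_
        ring
      exact h1.mul_const (q x y)
    have hDen0 : ((1 - (0:ℝ)) * pμ x + 0 * pν x) * q x y ≠ 0 := by
      have e : ((1 - (0:ℝ)) * pμ x + 0 * pν x) * q x y = pμ x * q x y := by ring
      rw [e]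
      exact (mul_pos (hpμpos x) (hqpos x y)).ne'
    have hquot2 : HasDerivAt
        (fun t : ℝ => hastingsRatio q (fun z => (1 - t) * pμ z + t * pν z) x y)
        ((pν y * pμ x - pμ y * pν x) * q y x / (pμ x ^ 2 * q x y)) 0 := by
      have h5 := hNum.div hDen hDen0
      refine h5.congr_deriv ?_
      simp only [sub_zero, one_mul, zero_mul, add_zero]
      have h1 : pμ x ≠ 0 := (hpμpos x).ne'
      have h2 : q x y ≠ 0 := (hqpos x y).ne'
      field_simp
      ring
    have hg_has : HasDerivAt
        (fun t : ℝ => g (hastingsRatio q (fun z => (1 - t) * pμ z + t * pν z) x y))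
        (g' (hastingsRatio q pμ x y) *
          ((pν y * pμ x - pμ y * pν x) * q y x / (pμ x ^ 2 * q x y))) 0 := by
      have h8 := (hg' (hastingsRatio q (fun z => (1 - (0:ℝ)) * pμ z + 0 * pν z) x y)
        (hrpos 0 ⟨le_rfl, zero_le_one⟩ y)).comp 0 hquot2
      rw [hr00 y] at h8
      exact h8
    have h6 := (hasDerivAt_iff_tendsto_slope.1 hg_has).mono_left
      (nhdsWithin_mono (0:ℝ) (show Set.Ici (0:ℝ) \ {0} ⊆ {(0:ℝ)}ᶜ from fun u hu => hu.2))
    have h7 := h6.const_mul ((f y - f x) * q x y)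
    simp only [hL_def]
    refine h7.congr fun t => ?_
    simp only [slope_def_field]
    rw [hr00 y]
    ring
  -- (3) the uniform bound
  have hGb : Integrable (fun y =>
      (cfx * (cg * cq) * Mx / (m * pμ x)) * (V y * (pμ y + pν y))) lam := hW.const_mul _
  have hboundφ : ∀ᶠ t in nhdsWithin (0:ℝ) (Set.Ici 0 \ {0}), ∀ᵐ y ∂lam,
      ‖(f y - f x) * (g (hastingsRatio q (fun z => (1 - t) * pμ z + t * pν z) x y)
        - g (hastingsRatio q pμ x y)) * q x y / t‖
      ≤ (cfx * (cg * cq) * Mx / (m * pμ x)) * (V y * (pμ y + pν y)) := by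
    filter_upwards [hev] with t ht
    refine Filter.Eventually.of_forall fun y => ?_
    have ht' : t ∈ Set.Icc (0:ℝ) 1 := ⟨ht.1.le, ht.2⟩
    have hptx : 0 < (1 - t) * pμ x + t * pν x := hppos t ht' x
    have hdiff_eq : hastingsRatio q (fun z => (1 - t) * pμ z + t * pν z) x y
        - hastingsRatio q pμ x y
        = t * ((pν y * pμ x - pμ y * pν x) * q y x)
            / (q x y * (((1 - t) * pμ x + t * pν x) * pμ x)) := by
      rw [hastingsRatio, hastingsRatio]
      field_simp [(hpμpos x).ne', (hqpos x y).ne', hptx.ne']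
      ring
    have hmvt : |g (hastingsRatio q (fun z => (1 - t) * pμ z + t * pν z) x y)
        - g (hastingsRatio q pμ x y)|
        ≤ cg * |hastingsRatio q (fun z => (1 - t) * pμ z + t * pν z) x y
            - hastingsRatio q pμ x y| :=
      mvt_abs hg' hcg (hr0pos y) (hrpos t ht' y)
    have hden : 0 < q x y * (((1 - t) * pμ x + t * pν x) * pμ x) :=
      mul_pos (hqpos x y) (mul_pos hptx (hpμpos x))
    have habs_rt : |hastingsRatio q (fun z => (1 - t) * pμ z + t * pν z) x y
        - hastingsRatio q pμ x y|
        = t * (|pν y * pμ x - pμ y * pν x| * q y x)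
            / (q x y * (((1 - t) * pμ x + t * pν x) * pμ x)) := by
      rw [hdiff_eq, abs_div, abs_mul, abs_mul, abs_of_pos ht.1, abs_of_pos (hqpos y x),
        abs_of_pos hden]
    have he : ‖(f y - f x) * (g (hastingsRatio q (fun z => (1 - t) * pμ z + t * pν z) x y)
        - g (hastingsRatio q pμ x y)) * q x y / t‖
        = |f y - f x| * |g (hastingsRatio q (fun z => (1 - t) * pμ z + t * pν z) x y)
            - g (hastingsRatio q pμ x y)| * q x y / t := by
      rw [Real.norm_eq_abs, abs_div, abs_mul, abs_mul, abs_of_pos (hqpos x y),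
        abs_of_pos ht.1]
    rw [he]
    have hstep1 : |f y - f x| * |g (hastingsRatio q (fun z => (1 - t) * pμ z + t * pν z) x y)
            - g (hastingsRatio q pμ x y)| * q x y / t
        ≤ |f y - f x| * (cg * |hastingsRatio q (fun z => (1 - t) * pμ z + t * pν z) x y
            - hastingsRatio q pμ x y|) * q x y / t := by
      apply div_le_div_of_nonneg_right ?_ ht.1.le
      exact mul_le_mul_of_nonneg_right (mul_le_mul_of_nonneg_left hmvt (abs_nonneg _))
        (hqpos x y).le
    refine hstep1.trans ?_
    have hstep2 : |f y - f x| * (cg * |hastingsRatio q (fun z => (1 - t) * pμ z + t * pν z) x y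
            - hastingsRatio q pμ x y|) * q x y / t
        = |f y - f x| * (cg * q y x) * |pν y * pμ x - pμ y * pν x|
            / (((1 - t) * pμ x + t * pν x) * pμ x) := by
      rw [habs_rt]
      exact calc_id ht.1.ne' (hqpos x y).ne' hptx.ne' (hpμpos x).ne'
    rw [hstep2]
    have hE : |pν y * pμ x - pμ y * pν x| ≤ (pμ y + pν y) * Mx := by
      have h1 : |pν y * pμ x - pμ y * pν x| ≤ |pν y * pμ x| + |pμ y * pν x| :=
        abs_sub (pν y * pμ x) (pμ y * pν x)
      rw [abs_of_pos (mul_pos (hpνpos y) (hpμpos x)),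
        abs_of_pos (mul_pos (hpμpos y) (hpνpos x))] at h1
      have h2 : pν y * pμ x ≤ pν y * Mx :=
        mul_le_mul_of_nonneg_left (le_max_left _ _) (hpνpos y).le
      have h3 : pμ y * pν x ≤ pμ y * Mx :=
        mul_le_mul_of_nonneg_left (le_max_right _ _) (hpμpos y).le
      have h4 : pν y * Mx + pμ y * Mx = (pμ y + pν y) * Mx := by ring
      linarith
    have h3 := prod3_div_le (a := |f y - f x|) (b := cg * q y x)
      (c := |pν y * pμ x - pμ y * pν x|)
      (a' := cfx * V y) (b' := cg * cq) (c' := (pμ y + pν y) * Mx)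
      (d := ((1 - t) * pμ x + t * pν x) * pμ x) (d' := m * pμ x)
      (abs_nonneg _) (mul_nonneg hcg0 (hqpos y x).le) (abs_nonneg _)
      (hfyx y) (mul_le_mul_of_nonneg_left (hcq y x) hcg0) hE
      (mul_pos hm (hpμpos x))
      (mul_le_mul_of_nonneg_right (hpm t ht') (hpμpos x).le)
    refine h3.trans ?_
    show cfx * V y * (cg * cq) * ((pμ y + pν y) * Mx) / (m * pμ x)
        ≤ cfx * (cg * cq) * Mx / (m * pμ x) * (V y * (pμ y + pν y))
    exact le_of_eq (by ring)
  -- (4) eventual measurability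
  have hmeasφ : ∀ᶠ t in nhdsWithin (0:ℝ) (Set.Ici 0 \ {0}), AEStronglyMeasurable (fun y =>
      (f y - f x) * (g (hastingsRatio q (fun z => (1 - t) * pμ z + t * pν z) x y)
        - g (hastingsRatio q pμ x y)) * q x y / t) lam := by
    filter_upwards [hev] with t ht
    have hgr0m : Measurable fun y => g (hastingsRatio q pμ x y) :=
      meas_comp_pos hgc hr0meas hr0pos
    exact (((hfm.sub measurable_const).mul
      ((hgrmeas t ⟨ht.1.le, ht.2⟩).sub hgr0m)).mul hq1).div_const t |>.aestronglyMeasurable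
  -- (5) dominated convergence
  have hDCT : Filter.Tendsto (fun t => ∫ y,
      (f y - f x) * (g (hastingsRatio q (fun z => (1 - t) * pμ z + t * pν z) x y)
        - g (hastingsRatio q pμ x y)) * q x y / t ∂lam)
      (nhdsWithin (0:ℝ) (Set.Ici 0 \ {0})) (𝓝 (∫ y, L y ∂lam)) :=
    tendsto_integral_filter_of_dominated_convergence _ hmeasφ hboundφ hGb
      (Filter.Eventually.of_forall hlimφ)
  -- (6) HasDerivWithinAt for the integral part
  have hI : HasDerivWithinAt (fun t => ∫ y, (f y - f x) *
      g (hastingsRatio q (fun z => (1 - t) * pμ z + t * pν z) x y) * q x y ∂lam)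
      (∫ y, L y ∂lam) (Set.Ici 0) 0 := by
    rw [hasDerivWithinAt_iff_tendsto_slope]
    refine hDCT.congr' ?_
    filter_upwards [hev] with t ht
    have ht' : t ∈ Set.Icc (0:ℝ) 1 := ⟨ht.1.le, ht.2⟩
    simp only [slope_def_field, sub_zero, one_mul, zero_mul, add_zero]
    rw [eq_div_iff ht.1.ne', ← integral_sub (hψ t ht') hψμ, ← integral_mul_const]
    refine integral_congr_ae (Filter.Eventually.of_forall fun y => ?_)
    field_simp [ht.1.ne']
  -- (7) assemble
  have hfinal := hI.const_add (f x)
  refine hfinal.congr_of_eventuallyEq ?_ ?_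
  · filter_upwards [mem_nhdsWithin_of_mem_nhds (Iio_mem_nhds one_pos),
      self_mem_nhdsWithin] with t h1t h2t
    exact hkernel t ⟨h2t, le_of_lt h1t⟩
  · exact hkernel 0 ⟨le_rfl, zero_le_one⟩
end

section
/- Let X be a measurable space equipped with a sigma-finite measure lambda, V : X -> [1,infinity) measurable, and let g be a balancing function that is twice differentiable and non-decreasing with g' and g'' bounded. Let q be a bounded positive proposal density, and let mu, nu be probability measures with everywhere positive bounded densities with respect to lambda satisfying ∫ V dmu < infinity and ∫ V dnu < infinity. Let rho be a probability measure with density such that sup_x rho(x)/mu(x)^2 < infinity and sup_x rho(x)/nu(x)^2 < infinity. Then, with P_mu, P_nu the Hastings kernels with invariant distributions mu, nu, one has: sup over measurable f with ||f||_V <= 1 of |P_mu(rho,f) - P_nu(rho,f)| is at most M_rho * ||mu - nu||_V, where M_rho := ∫_0^1 { ∫ sup_y [ (V(y)+V(z)) (rho(z)/mu_t(z)) q(y,z) g'(r_{mu_t}(z,y)) / V(y) ] lambda(dz) + ∫ sup_y [ (V(y)+V(z)) mu_t(z) q(z,y) g'(r_{mu_t}(y,z)) rho(y) / (mu_t(y)^2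 V(y)) ] lambda(dz) } dt. -/
open MeasureTheory ProbabilityTheory ENNReal

/-- The `V`-norm `‖μ - ν‖_V = sup { |∫ f dμ - ∫ f dν| : f measurable, ‖f‖_V ≤ 1 }`. -/
noncomputable def vDistE {X : Type*} [MeasurableSpace X] (V : X → ℝ) (μ ν : Measure X) :
    ℝ≥0∞ :=
  ⨆ f : {f : X → ℝ // Measurable f ∧ ∀ x, |f x| ≤ V x},
    ENNReal.ofReal |(∫ x, f.1 x ∂μ) - ∫ x, f.1 x ∂ν|

section Aux

lemma mix_pos' {a a' t : ℝ} (ha : 0 < a) (ha' : 0 < a') (ht0 : 0 ≤ t) (ht1 : t ≤ 1) :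
    0 < (1-t)*a + t*a' := by
  rcases eq_or_lt_of_le ht0 with h | h
  · simp [← h, ha]
  · exact add_pos_of_nonneg_of_pos (mul_nonneg (by linarith) ha.le) (mul_pos h ha')

lemma measurable_ite_pos (φ : ℝ → ℝ) (hφ : ∀ u : ℝ, 0 < u → ContinuousAt φ u) :
    Measurable (fun u => if 0 < u then φ u else 0) := by
  have hco : ContinuousOn φ (Set.Ioi 0) :=
    fun u hu => (hφ u hu).continuousWithinAt
  apply measurable_of_isOpen
  intro s hs
  have hopen : IsOpen (Set.Ioi (0:ℝ) ∩ φ ⁻¹' s) :=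
    hco.isOpen_inter_preimage isOpen_Ioi hs
  by_cases h0 : (0:ℝ) ∈ s
  · have : (fun u => if 0 < u then φ u else 0) ⁻¹' s
        = (Set.Ioi (0:ℝ) ∩ φ ⁻¹' s) ∪ Set.Iic 0 := by
      ext u
      by_cases hu : 0 < u
      · simp [Set.mem_preimage, hu, h0, Set.mem_Ioi, Set.mem_Iic, not_le.mpr hu]
      · simp [Set.mem_preimage, hu, h0, Set.mem_Ioi, Set.mem_Iic, not_lt.mp hu]
    rw [this]; exact hopen.measurableSet.union measurableSet_Iic
  · have : (fun u => if 0 < u then φ u else 0) ⁻¹' s = Set.Ioi (0:ℝ) ∩ φ ⁻¹' s := by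
      ext u
      by_cases hu : 0 < u
      · simp [Set.mem_preimage, hu, h0, Set.mem_Ioi]
      · simp [Set.mem_preimage, hu, h0, Set.mem_Ioi, not_lt.mp hu]
    rw [this]; exact hopen.measurableSet

lemma measurable_comp_pos {α : Type*} [MeasurableSpace α] {φ : ℝ → ℝ}
    (hφ : ∀ u : ℝ, 0 < u → ContinuousAt φ u) {r : α → ℝ} (hr : Measurable r)
    (hrpos : ∀ a, 0 < r a) : Measurable (fun a => φ (r a)) := by
  have hψ : Continuous (fun u : Set.Ioi (0:ℝ) => φ u.1) :=
    continuous_iff_continuousAt.mpr fun ⟨u, hu⟩ => (hφ u hu).comp continuousAt_subtype_val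
  have hr' : Measurable (fun a => (⟨r a, hrpos a⟩ : Set.Ioi (0:ℝ))) := hr.subtype_mk
  exact hψ.measurable.comp hr'

lemma deriv_nonneg_of_monotoneOn {g g' : ℝ → ℝ}
    (hm : MonotoneOn g (Set.Ioi 0))
    (h : ∀ u : ℝ, 0 < u → HasDerivAt g (g' u) u) {u : ℝ} (hu : 0 < u) : 0 ≤ g' u := by
  have ht : Filter.Tendsto (slope g u) (nhdsWithin u (Set.Ioi u)) (nhds (g' u)) :=
    ((hasDerivAt_iff_tendsto_slope).mp (h u hu)).mono_left
      (nhdsWithin_mono u (fun v hv => Set.mem_compl_singleton_iff.mpr (ne_of_gt hv)))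
  refine ge_of_tendsto ht ?_
  refine eventually_nhdsWithin_of_forall (fun v hv => ?_)
  have huv : u < v := hv
  have : g u ≤ g v := hm hu (lt_trans hu huv) huv.le
  rw [slope_def_field]
  exact div_nonneg (by linarith) (by linarith)

lemma mvt_bound {g g' : ℝ → ℝ}
    (hg' : ∀ u : ℝ, 0 < u → HasDerivAt g (g' u) u)
    (hg'c : ∀ u : ℝ, 0 < u → ContinuousAt g' u)
    (hg'nn : ∀ u : ℝ, 0 < u → 0 ≤ g' u)
    {a a' b b' qxy qyx : ℝ} (ha : 0 < a) (ha' : 0 < a') (hb : 0 < b) (hb' : 0 < b')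
    (hqxy : 0 < qxy) (hqyx : 0 < qyx) :
    ENNReal.ofReal |g (b' * qyx / (a' * qxy)) - g (b * qyx / (a * qxy))|
      ≤ ∫⁻ t in Set.Icc (0:ℝ) 1, ENNReal.ofReal
          (g' (((1-t)*b + t*b') * qyx / (((1-t)*a + t*a') * qxy)) *
            ((|b' - b| * ((1-t)*a + t*a') + ((1-t)*b + t*b') * |a' - a|) * qyx
              / (((1-t)*a + t*a')^2 * qxy))) := by
  set A : ℝ → ℝ := fun t => (1-t)*a + t*a' with hA_def
  set B : ℝ → ℝ := fun t => (1-t)*b + t*b' with hB_def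
  set R : ℝ → ℝ := fun t => B t * qyx / (A t * qxy) with hR_def
  set dR : ℝ → ℝ := fun t =>
    ((b' - b) * qyx * (A t * qxy) - B t * qyx * ((a' - a) * qxy)) / (A t * qxy)^2 with hdR_def
  have hApos : ∀ t ∈ Set.Icc (0:ℝ) 1, 0 < A t := fun t ht => mix_pos' ha ha' ht.1 ht.2
  have hBpos : ∀ t ∈ Set.Icc (0:ℝ) 1, 0 < B t := fun t ht => mix_pos' hb hb' ht.1 ht.2
  have hRpos : ∀ t ∈ Set.Icc (0:ℝ) 1, 0 < R t := fun t ht =>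
    div_pos (mul_pos (hBpos t ht) hqyx) (mul_pos (hApos t ht) hqxy)
  have hAd : ∀ t : ℝ, HasDerivAt A (a' - a) t := by
    intro t
    have h1 : HasDerivAt (fun t : ℝ => (1-t)*a + t*a') ((0-1)*a + 1*a') t := by
      exact (((hasDerivAt_const t (1:ℝ)).sub (hasDerivAt_id t)).mul_const a).add
        ((hasDerivAt_id t).mul_const a')
    simpa using h1.congr_deriv (by ring)
  have hBd : ∀ t : ℝ, HasDerivAt B (b' - b) t := by
    intro t
    have h1 : HasDerivAt (fun t : ℝ => (1-t)*b + t*b') ((0-1)*b + 1*b') t := by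
      exact (((hasDerivAt_const t (1:ℝ)).sub (hasDerivAt_id t)).mul_const b).add
        ((hasDerivAt_id t).mul_const b')
    simpa using h1.congr_deriv (by ring)
  have hRd : ∀ t ∈ Set.Icc (0:ℝ) 1, HasDerivAt R (dR t) t := by
    intro t ht
    exact ((hBd t).mul_const qyx).div ((hAd t).mul_const qxy)
      (ne_of_gt (mul_pos (hApos t ht) hqxy))
  have hGd : ∀ t ∈ Set.Icc (0:ℝ) 1, HasDerivAt (fun t => g (R t)) (g' (R t) * dR t) t :=
    fun t ht => (hg' (R t) (hRpos t ht)).comp t (hRd t ht)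
  have hAc : Continuous A := by fun_prop
  have hBc : Continuous B := by fun_prop
  have hRc : ContinuousOn R (Set.Icc 0 1) :=
    ((hBc.mul continuous_const).continuousOn).div
      ((hAc.mul continuous_const).continuousOn)
      (fun t ht => ne_of_gt (mul_pos (hApos t ht) hqxy))
  have hdRc : ContinuousOn dR (Set.Icc 0 1) := by
    apply ContinuousOn.div
    · fun_prop
    · fun_prop
    · exact fun t ht => pow_ne_zero _ (ne_of_gt (mul_pos (hApos t ht) hqxy))
  have hG'c : ContinuousOn (fun t => g' (R t) * dR t) (Set.Icc 0 1) := by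
    apply ContinuousOn.mul _ hdRc
    exact ContinuousOn.comp (fun u hu => (hg'c u hu).continuousWithinAt) hRc
      (fun t ht => hRpos t ht)
  have huIcc : Set.uIcc (0:ℝ) 1 = Set.Icc 0 1 := Set.uIcc_of_le zero_le_one
  have hFTC : ∫ t in (0:ℝ)..1, g' (R t) * dR t = g (R 1) - g (R 0) := by
    exact intervalIntegral.integral_eq_sub_of_hasDerivAt (f := fun t => g (R t))
      (f' := fun t => g' (R t) * dR t) (by rw [huIcc]; exact hGd)
      (by apply ContinuousOn.intervalIntegrable; rwa [huIcc])
  have hR0 : R 0 = b * qyx / (a * qxy) := by simp [hR_def, hA_def, hB_def]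
  have hR1 : R 1 = b' * qyx / (a' * qxy) := by simp [hR_def, hA_def, hB_def]
  have habs : |g (b' * qyx / (a' * qxy)) - g (b * qyx / (a * qxy))|
      ≤ ∫ t in (0:ℝ)..1, |g' (R t) * dR t| := by
    rw [← hR0, ← hR1, ← hFTC]
    exact intervalIntegral.abs_integral_le_integral_abs zero_le_one
  have hIntAbs : IntegrableOn (fun t => |g' (R t) * dR t|) (Set.Icc (0:ℝ) 1) volume :=
    hG'c.abs.integrableOn_compact isCompact_Icc
  have hstep : ENNReal.ofReal (∫ t in (0:ℝ)..1, |g' (R t) * dR t|)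
      ≤ ∫⁻ t in Set.Icc (0:ℝ) 1, ENNReal.ofReal (|g' (R t) * dR t|) := by
    rw [intervalIntegral.integral_of_le zero_le_one,
      ofReal_integral_eq_lintegral_ofReal (hIntAbs.mono_set Set.Ioc_subset_Icc_self)
        (Filter.Eventually.of_forall fun t => abs_nonneg _)]
    exact lintegral_mono_set Set.Ioc_subset_Icc_self
  refine le_trans (le_trans (ENNReal.ofReal_le_ofReal habs) hstep) ?_
  refine lintegral_mono_ae ((ae_restrict_iff' measurableSet_Icc).mpr
    (Filter.Eventually.of_forall fun t ht => ?_))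
  apply ENNReal.ofReal_le_ofReal
  have hAt := hApos t ht
  have hBt := hBpos t ht
  rw [abs_mul, abs_of_nonneg (hg'nn _ (hRpos t ht))]
  apply mul_le_mul_of_nonneg_left _ (hg'nn _ (hRpos t ht))
  have hnum : |(b' - b) * qyx * (A t * qxy) - B t * qyx * ((a' - a) * qxy)|
      ≤ (|b' - b| * A t + B t * |a' - a|) * (qyx * qxy) := by
    calc |(b' - b) * qyx * (A t * qxy) - B t * qyx * ((a' - a) * qxy)|
        ≤ |(b' - b) * qyx * (A t * qxy)| + |B t * qyx * ((a' - a) * qxy)| :=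
          abs_sub _ _
      _ = (|b' - b| * A t + B t * |a' - a|) * (qyx * qxy) := by
          simp only [abs_mul, abs_of_pos hqyx, abs_of_pos hAt, abs_of_pos hqxy,
            abs_of_pos hBt]
          ring
  have hden : |(A t * qxy)^2| = (A t * qxy)^2 := abs_of_pos (by positivity)
  have hqxyne : qxy ≠ 0 := ne_of_gt hqxy
  calc |dR t| = |(b' - b) * qyx * (A t * qxy) - B t * qyx * ((a' - a) * qxy)| / (A t * qxy)^2 := by
        rw [hdR_def]; rw [abs_div, hden]
    _ ≤ ((|b' - b| * A t + B t * |a' - a|) * (qyx * qxy)) / (A t * qxy)^2 :=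
        (div_le_div_iff_of_pos_right (by positivity)).mpr hnum
    _ = (|b' - b| * A t + B t * |a' - a|) * qyx / ((A t)^2 * qxy) := by
        rw [show (A t * qxy)^2 = ((A t)^2*qxy)*qxy by ring, ← mul_assoc]
        rw [mul_div_mul_right _ _ hqxyne]

end Aux

/-- **Mean value inequality for Hastings kernels (density case):**
for every measurable `f` with `‖f‖_V ≤ 1`,
`|P_μ(ρ,f) - P_ν(ρ,f)| ≤ M_ρ ‖μ - ν‖_V`, where
`M_ρ = ∫_0^1 { ∫ sup_y [(V(y)+V(z)) (pρ(z)/p_t(z)) q(y,z) g'(r_{μ_t}(z,y)) / V(y)] λ(dz)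
  + ∫ sup_y [(V(y)+V(z)) p_t(z) q(z,y) g'(r_{μ_t}(y,z)) pρ(y) / (p_t(y)² V(y))] λ(dz) } dt`
and `p_t = (1-t) pμ + t pν`. -/
theorem stmt_8 {X : Type*} [MeasurableSpace X]
    (lam : Measure X) [SigmaFinite lam]
    (V : X → ℝ) (hVm : Measurable V) (hV1 : ∀ x, 1 ≤ V x)
    (g g' g'' : ℝ → ℝ)
    (hgpos : ∀ u : ℝ, 0 < u → 0 < g u ∧ g u ≤ 1)
    (hgbal : ∀ u : ℝ, 0 < u → g u = u * g (1 / u))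
    (hgmono : MonotoneOn g (Set.Ioi 0))
    (hg' : ∀ u : ℝ, 0 < u → HasDerivAt g (g' u) u)
    (hg'' : ∀ u : ℝ, 0 < u → HasDerivAt g' (g'' u) u)
    (hg'b : ∃ c, ∀ u : ℝ, 0 < u → |g' u| ≤ c)
    (hg''b : ∃ c, ∀ u : ℝ, 0 < u → |g'' u| ≤ c)
    (q : X → X → ℝ) (hqm : Measurable (Function.uncurry q))
    (hqpos : ∀ x y, 0 < q x y) (hqb : ∃ c, ∀ x y, q x y ≤ c)
    (hqint : ∀ x, ∫ y, q x y ∂lam = 1)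
    (pμ pν : X → ℝ) (hpμm : Measurable pμ) (hpνm : Measurable pν)
    (hpμpos : ∀ x, 0 < pμ x) (hpνpos : ∀ x, 0 < pν x)
    (hpμb : ∃ c, ∀ x, pμ x ≤ c) (hpνb : ∃ c, ∀ x, pν x ≤ c)
    (hμprob : IsProbabilityMeasure (lam.withDensity fun x => ENNReal.ofReal (pμ x)))
    (hνprob : IsProbabilityMeasure (lam.withDensity fun x => ENNReal.ofReal (pν x)))
    (hVμ : Integrable (fun x => V x * pμ x) lam)
    (hVν : Integrable (fun x => V x * pν x) lam)
    (pρ : X → ℝ) (hpρm : Measurable pρ) (hpρ0 : ∀ x, 0 ≤ pρ x)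
    (hρprob : IsProbabilityMeasure (lam.withDensity fun x => ENNReal.ofReal (pρ x)))
    (hρμ : ∃ c, ∀ x, pρ x ≤ c * pμ x ^ 2)
    (hρν : ∃ c, ∀ x, pρ x ≤ c * pν x ^ 2) :
    ∀ f : X → ℝ, Measurable f → (∀ x, |f x| ≤ V x) →
      ENNReal.ofReal
          |(∫ x, hastingsKernelFun lam g q pμ x f
              ∂(lam.withDensity fun x => ENNReal.ofReal (pρ x)))
            - ∫ x, hastingsKernelFun lam g q pν x f
                ∂(lam.withDensity fun x => ENNReal.ofReal (pρ x))|
        ≤ (∫⁻ t in Set.Icc (0 : ℝ) 1,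
              ((∫⁻ z, ⨆ y, ENNReal.ofReal
                  ((V y + V z) * (pρ z / ((1 - t) * pμ z + t * pν z)) * q y z *
                    g' (hastingsRatio q (fun w => (1 - t) * pμ w + t * pν w) z y) / V y)
                ∂lam)
              + ∫⁻ z, ⨆ y, ENNReal.ofReal
                  ((V y + V z) * ((1 - t) * pμ z + t * pν z) * q z y *
                    g' (hastingsRatio q (fun w => (1 - t) * pμ w + t * pν w) y z) * pρ y /
                      (((1 - t) * pμ y + t * pν y) ^ 2 * V y))
                ∂lam))
          * vDistE V (lam.withDensity fun x => ENNReal.ofReal (pμ x))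
              (lam.withDensity fun x => ENNReal.ofReal (pν x)) := by
  intro f hfm hfV
  rcases isEmpty_or_nonempty X with hX | hX
  · simp only [integral_of_isEmpty, sub_zero, abs_zero, ENNReal.ofReal_zero]
    exact zero_le
  obtain ⟨x₀⟩ := hX
  obtain ⟨cq, hcq⟩ := hqb
  obtain ⟨cμb, hcμb⟩ := hpμb
  obtain ⟨cνb, hcνb⟩ := hpνb
  obtain ⟨cρμ, hcρμ⟩ := hρμ
  obtain ⟨cρν, hcρν⟩ := hρν
  have hV0 : ∀ x, 0 ≤ V x := fun x => le_trans zero_le_one (hV1 x)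
  have hgc : ∀ u : ℝ, 0 < u → ContinuousAt g u := fun u hu => (hg' u hu).continuousAt
  have hg'c : ∀ u : ℝ, 0 < u → ContinuousAt g' u := fun u hu => (hg'' u hu).continuousAt
  have hg'nn : ∀ u : ℝ, 0 < u → 0 ≤ g' u := fun u hu =>
    deriv_nonneg_of_monotoneOn hgmono hg' hu
  have hgnn : ∀ u : ℝ, 0 < u → 0 ≤ g u := fun u hu => (hgpos u hu).1.le
  have hgle : ∀ u : ℝ, 0 < u → g u ≤ u := by
    intro u hu
    rw [hgbal u hu]
    calc u * g (1/u) ≤ u * 1 :=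
          mul_le_mul_of_nonneg_left (hgpos (1/u) (by positivity)).2 hu.le
      _ = u := mul_one u
  have hrpos : ∀ (pm : X → ℝ), (∀ w, 0 < pm w) → ∀ x y, 0 < hastingsRatio q pm x y :=
    fun pm hpm x y => div_pos (mul_pos (hpm y) (hqpos y x)) (mul_pos (hpm x) (hqpos x y))
  have hrm2 : ∀ (pm : X → ℝ), Measurable pm →
      Measurable (fun p : X × X => hastingsRatio q pm p.1 p.2) := by
    intro pm hm
    exact ((hm.comp measurable_snd).mul (hqm.comp (measurable_snd.prodMk measurable_fst))).div
      ((hm.comp measurable_fst).mul (hqm.comp (measurable_fst.prodMk measurable_snd)))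
  have hrym : ∀ (pm : X → ℝ), Measurable pm → ∀ x,
      Measurable (fun y => hastingsRatio q pm x y) :=
    fun pm hm x => (hrm2 pm hm).comp (measurable_const.prodMk measurable_id)
  have hqym : ∀ x, Measurable (fun y => q x y) :=
    fun x => hqm.comp (measurable_const.prodMk measurable_id)
  have hqx : ∀ x, Integrable (fun y => q x y) lam := by
    intro x; by_contra h
    have h2 := hqint x
    rw [integral_undef h] at h2; norm_num at h2
  have hgq : ∀ (pm : X → ℝ), (∀ w, 0 < pm w) → ∀ x y,
      g (hastingsRatio q pm x y) * q x y ≤ pm y * cq / pm x := by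
    intro pm hpm x y
    have h1 : g (hastingsRatio q pm x y) * q x y ≤ hastingsRatio q pm x y * q x y :=
      mul_le_mul_of_nonneg_right (hgle _ (hrpos pm hpm x y)) (hqpos x y).le
    have h2 : hastingsRatio q pm x y * q x y = pm y * q y x / pm x := by
      unfold hastingsRatio
      rw [div_mul_eq_mul_div, mul_div_mul_right _ _ (ne_of_gt (hqpos x y))]
    have h3 : pm y * q y x / pm x ≤ pm y * cq / pm x :=
      (div_le_div_iff_of_pos_right (hpm x)).mpr
        (mul_le_mul_of_nonneg_left (hcq y x) (hpm y).le)
    exact (h2 ▸ h1).trans h3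
  have habs3 : ∀ (pm : X → ℝ), (∀ w, 0 < pm w) → ∀ (h : X → ℝ), (∀ y, |h y| ≤ V y) →
      ∀ x y, |h y * g (hastingsRatio q pm x y) * q x y| ≤ V y * pm y * (cq / pm x) := by
    intro pm hpm h hhV x y
    have hg0 : 0 ≤ g (hastingsRatio q pm x y) := hgnn _ (hrpos pm hpm x y)
    rw [abs_mul, abs_mul, abs_of_nonneg hg0, abs_of_pos (hqpos x y)]
    calc |h y| * g (hastingsRatio q pm x y) * q x y
        = |h y| * (g (hastingsRatio q pm x y) * q x y) := by ring
      _ ≤ V y * (pm y * cq / pm x) := by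
          apply mul_le_mul (hhV y) (hgq pm hpm x y) ?_ (hV0 y)
          exact mul_nonneg hg0 (hqpos x y).le
      _ = V y * pm y * (cq / pm x) := by ring
  have hIy : ∀ (pm : X → ℝ), Measurable pm → (∀ w, 0 < pm w) →
      Integrable (fun w => V w * pm w) lam → ∀ (x : X) (h : X → ℝ), Measurable h →
      (∀ y, |h y| ≤ V y) →
      Integrable (fun y => h y * g (hastingsRatio q pm x y) * q x y) lam := by
    intro pm hm hpm hVint x h hhm hhV
    apply Integrable.mono' (hVint.mul_const (cq / pm x))
    · exact ((hhm.mul (measurable_comp_pos hgc (hrym pm hm x) (hrpos pm hpm x))).mul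
        (hqym x)).aestronglyMeasurable
    · exact Filter.Eventually.of_forall fun y => by
        rw [Real.norm_eq_abs]; exact habs3 pm hpm h hhV x y
  have hIyμf : ∀ x, Integrable (fun y => f y * g (hastingsRatio q pμ x y) * q x y) lam :=
    fun x => hIy pμ hpμm hpμpos hVμ x f hfm hfV
  have hIyνf : ∀ x, Integrable (fun y => f y * g (hastingsRatio q pν x y) * q x y) lam :=
    fun x => hIy pν hpνm hpνpos hVν x f hfm hfV
  have h1V : ∀ y : X, |(1:ℝ)| ≤ V y := fun y => by rw [abs_one]; exact hV1 y
  have hIyμ1 : ∀ x, Integrable (fun y => g (hastingsRatio q pμ x y) * q x y) lam := by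
    intro x
    have := hIy pμ hpμm hpμpos hVμ x (fun _ => 1) measurable_const h1V
    simpa using this
  have hIyν1 : ∀ x, Integrable (fun y => g (hastingsRatio q pν x y) * q x y) lam := by
    intro x
    have := hIy pν hpνm hpνpos hVν x (fun _ => 1) measurable_const h1V
    simpa using this
  have hI2 : ∀ (pm : X → ℝ), (∀ w, 0 < pm w) →
      (∀ x, Integrable (fun y => g (hastingsRatio q pm x y) * q x y) lam) → ∀ x,
      0 ≤ (∫ y, g (hastingsRatio q pm x y) * q x y ∂lam)
        ∧ (∫ y, g (hastingsRatio q pm x y) * q x y ∂lam) ≤ 1 := by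
    intro pm hpm hInt x
    refine ⟨integral_nonneg fun y => mul_nonneg (hgnn _ (hrpos pm hpm x y)) (hqpos x y).le, ?_⟩
    calc (∫ y, g (hastingsRatio q pm x y) * q x y ∂lam) ≤ ∫ y, q x y ∂lam := by
          apply integral_mono (hInt x) (hqx x)
          intro y
          have := mul_le_mul_of_nonneg_right (hgpos _ (hrpos pm hpm x y)).2 (hqpos x y).le
          simpa using this
      _ = 1 := hqint x
  have hpμInt : Integrable pμ lam := by
    apply hVμ.mono' hpμm.aestronglyMeasurable
    refine Filter.Eventually.of_forall fun w => ?_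
    rw [Real.norm_eq_abs, abs_of_pos (hpμpos w)]
    nlinarith [hV1 w, (hpμpos w).le]
  have hpνInt : Integrable pν lam := by
    apply hVν.mono' hpνm.aestronglyMeasurable
    refine Filter.Eventually.of_forall fun w => ?_
    rw [Real.norm_eq_abs, abs_of_pos (hpνpos w)]
    nlinarith [hV1 w, (hpνpos w).le]
  -- kernel abs bound
  have hKb : ∀ (pm : X → ℝ), Measurable pm → (∀ w, 0 < pm w) →
      Integrable (fun w => V w * pm w) lam →
      (∀ x, Integrable (fun y => f y * g (hastingsRatio q pm x y) * q x y) lam) →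
      (∀ x, Integrable (fun y => g (hastingsRatio q pm x y) * q x y) lam) → ∀ x,
      |hastingsKernelFun lam g q pm x f| ≤ (∫ w, V w * pm w ∂lam) * (cq / pm x) + V x := by
    intro pm hm hpm hVint hIf hI1 x
    have hI2x := hI2 pm hpm hI1 x
    unfold hastingsKernelFun
    refine (abs_add_le _ _).trans (add_le_add ?_ ?_)
    · calc |∫ y, f y * g (hastingsRatio q pm x y) * q x y ∂lam|
          ≤ ∫ y, |f y * g (hastingsRatio q pm x y) * q x y| ∂lam := by
            simpa only [Real.norm_eq_abs] using
              norm_integral_le_integral_norm (μ := lam)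
                (fun y => f y * g (hastingsRatio q pm x y) * q x y)
        _ ≤ ∫ y, V y * pm y * (cq / pm x) ∂lam :=
            integral_mono (hIf x).abs (hVint.mul_const _)
              (fun y => habs3 pm hpm f hfV x y)
        _ = (∫ w, V w * pm w ∂lam) * (cq / pm x) := integral_mul_const _ _
    · rw [abs_mul]
      have h12 : |1 - ∫ y, g (hastingsRatio q pm x y) * q x y ∂lam| ≤ 1 := by
        rw [abs_le]; constructor <;> [linarith [hI2x.2]; linarith [hI2x.1]]
      calc |f x| * |1 - ∫ y, g (hastingsRatio q pm x y) * q x y ∂lam|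
          ≤ V x * 1 := mul_le_mul (hfV x) h12 (abs_nonneg _) (hV0 x)
        _ = V x := mul_one _
  -- strong measurability of the kernel function
  have hSM : ∀ (pm : X → ℝ), Measurable pm → (∀ w, 0 < pm w) →
      StronglyMeasurable (fun x => hastingsKernelFun lam g q pm x f) := by
    intro pm hm hpm
    have hq2 : Measurable (fun p : X × X => q p.1 p.2) := hqm
    have hgr : Measurable (fun p : X × X => g (hastingsRatio q pm p.1 p.2)) :=
      measurable_comp_pos hgc (hrm2 pm hm) (fun p => hrpos pm hpm p.1 p.2)
    have h1 : StronglyMeasurable (fun x => ∫ y, f y * g (hastingsRatio q pm x y) * q x y ∂lam) :=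
      StronglyMeasurable.integral_prod_right'
        (f := fun p : X × X => f p.2 * g (hastingsRatio q pm p.1 p.2) * q p.1 p.2)
        (((hfm.comp measurable_snd).mul hgr).mul hq2).stronglyMeasurable
    have h2 : StronglyMeasurable (fun x => ∫ y, g (hastingsRatio q pm x y) * q x y ∂lam) :=
      StronglyMeasurable.integral_prod_right'
        (f := fun p : X × X => g (hastingsRatio q pm p.1 p.2) * q p.1 p.2)
        (hgr.mul hq2).stronglyMeasurable
    unfold hastingsKernelFun
    exact h1.add (hfm.stronglyMeasurable.mul (stronglyMeasurable_const.sub h2))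
  -- integrability in x of pρ * kernel
  have hPx : ∀ (pm : X → ℝ), Measurable pm → (∀ w, 0 < pm w) →
      Integrable (fun w => V w * pm w) lam → Integrable pm lam →
      ∀ (cm c : ℝ), (∀ w, pm w ≤ cm) → (∀ w, pρ w ≤ c * pm w ^ 2) →
      (∀ x, |hastingsKernelFun lam g q pm x f|
        ≤ (∫ w, V w * pm w ∂lam) * (cq / pm x) + V x) →
      Integrable (fun x => pρ x * hastingsKernelFun lam g q pm x f) lam := by
    intro pm hm hpm hVint hpmInt cm c hcmb hρc hKbx
    have hc0 : 0 ≤ c := by nlinarith [hρc x₀, hpρ0 x₀, pow_pos (hpm x₀) 2]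
    have hK0 : 0 ≤ ∫ w, V w * pm w ∂lam :=
      integral_nonneg fun w => mul_nonneg (hV0 w) (hpm w).le
    have hq0 : 0 ≤ cq := ((hqpos x₀ x₀).le).trans (hcq x₀ x₀)
    apply Integrable.mono'
      ((hpmInt.const_mul (c * ((∫ w, V w * pm w ∂lam) * cq))).add (hVint.const_mul (c * cm)))
    · exact hpρm.aestronglyMeasurable.mul (hSM pm hm hpm).aestronglyMeasurable
    · refine Filter.Eventually.of_forall fun x => ?_
      rw [Real.norm_eq_abs, abs_mul, abs_of_nonneg (hpρ0 x)]
      have h2 : pρ x * |hastingsKernelFun lam g q pm x f|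
          ≤ pρ x * ((∫ w, V w * pm w ∂lam) * (cq / pm x) + V x) :=
        mul_le_mul_of_nonneg_left (hKbx x) (hpρ0 x)
      refine h2.trans ?_
      have h3 : pρ x * ((∫ w, V w * pm w ∂lam) * (cq / pm x))
          ≤ (c * pm x ^ 2) * ((∫ w, V w * pm w ∂lam) * (cq / pm x)) :=
        mul_le_mul_of_nonneg_right (hρc x)
          (mul_nonneg hK0 (div_nonneg hq0 (hpm x).le))
      have h4 : (c * pm x ^ 2) * ((∫ w, V w * pm w ∂lam) * (cq / pm x))
          = c * ((∫ w, V w * pm w ∂lam) * cq) * pm x := by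
        have hne : pm x ≠ 0 := ne_of_gt (hpm x)
        field_simp
      have h5 : pρ x * V x ≤ (c * pm x ^ 2) * V x :=
        mul_le_mul_of_nonneg_right (hρc x) (hV0 x)
      have h6 : (c * pm x ^ 2) * V x ≤ (c * cm) * (V x * pm x) := by
        have e1 : (c * pm x ^ 2) * V x = (c * V x * pm x) * pm x := by ring
        have e2 : (c * cm) * (V x * pm x) = (c * V x * pm x) * cm := by ring
        rw [e1, e2]
        exact mul_le_mul_of_nonneg_left (hcmb x)
          (mul_nonneg (mul_nonneg hc0 (hV0 x)) (hpm x).le)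
      calc pρ x * ((∫ w, V w * pm w ∂lam) * (cq / pm x) + V x)
          = pρ x * ((∫ w, V w * pm w ∂lam) * (cq / pm x)) + pρ x * V x := by ring
        _ ≤ c * ((∫ w, V w * pm w ∂lam) * cq) * pm x + (c * cm) * (V x * pm x) :=
            add_le_add (h3.trans_eq h4) (h5.trans h6)
  have hPμint : Integrable (fun x => pρ x * hastingsKernelFun lam g q pμ x f) lam :=
    hPx pμ hpμm hpμpos hVμ hpμInt cμb cρμ hcμb hcρμ
      (hKb pμ hpμm hpμpos hVμ hIyμf hIyμ1)
  have hPνint : Integrable (fun x => pρ x * hastingsKernelFun lam g q pν x f) lam :=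
    hPx pν hpνm hpνpos hVν hpνInt cνb cρν hcνb hcρν
      (hKb pν hpνm hpνpos hVν hIyνf hIyν1)
  -- pointwise kernel difference formula
  have hker : ∀ x : X, hastingsKernelFun lam g q pμ x f - hastingsKernelFun lam g q pν x f
      = ∫ y, (f y - f x) * (g (hastingsRatio q pμ x y) - g (hastingsRatio q pν x y)) * q x y
          ∂lam := by
    intro x
    have e : (fun y => (f y - f x) * (g (hastingsRatio q pμ x y) - g (hastingsRatio q pν x y))
        * q x y)
        = fun y => (f y * g (hastingsRatio q pμ x y) * q x y
            - f y * g (hastingsRatio q pν x y) * q x y)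
          - (f x * (g (hastingsRatio q pμ x y) * q x y)
            - f x * (g (hastingsRatio q pν x y) * q x y)) := funext fun y => by ring
    have hA : Integrable (fun y => f y * g (hastingsRatio q pμ x y) * q x y
        - f y * g (hastingsRatio q pν x y) * q x y) lam := (hIyμf x).sub (hIyνf x)
    have hB1 : Integrable (fun y => f x * (g (hastingsRatio q pμ x y) * q x y)) lam :=
      (hIyμ1 x).const_mul (f x)
    have hB2 : Integrable (fun y => f x * (g (hastingsRatio q pν x y) * q x y)) lam :=
      (hIyν1 x).const_mul (f x)
    have hB : Integrable (fun y => f x * (g (hastingsRatio q pμ x y) * q x y)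
        - f x * (g (hastingsRatio q pν x y) * q x y)) lam := hB1.sub hB2
    rw [e, integral_sub hA hB, integral_sub (hIyμf x) (hIyνf x),
      integral_sub hB1 hB2, integral_const_mul, integral_const_mul]
    unfold hastingsKernelFun
    ring
  -- density rewrite
  have hdens : ∀ (pm : X → ℝ), Measurable pm → (∀ w, 0 ≤ pm w) → ∀ (h : X → ℝ),
      ∫ x, h x ∂(lam.withDensity fun x => ENNReal.ofReal (pm x)) = ∫ x, pm x * h x ∂lam := by
    intro pm hm h0 h
    have heq : (fun x => ENNReal.ofReal (pm x)) = (fun x => ((pm x).toNNReal : ℝ≥0∞)) := rfl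
    rw [heq, integral_withDensity_eq_integral_smul hm.real_toNNReal h]
    congr 1; funext x
    rw [NNReal.smul_def, Real.coe_toNNReal _ (h0 x), smul_eq_mul]
  have hD : (∫ x, hastingsKernelFun lam g q pμ x f
        ∂(lam.withDensity fun x => ENNReal.ofReal (pρ x)))
      - (∫ x, hastingsKernelFun lam g q pν x f
        ∂(lam.withDensity fun x => ENNReal.ofReal (pρ x)))
      = ∫ x, pρ x * (hastingsKernelFun lam g q pμ x f - hastingsKernelFun lam g q pν x f)
          ∂lam := by
    rw [hdens pρ hpρm hpρ0, hdens pρ hpρm hpρ0, ← integral_sub hPμint hPνint]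
    congr 1; funext x; ring
  set gd : ℝ → ℝ := fun u => if 0 < u then g' u else 0 with hgd_def
  have hgdm : Measurable gd := measurable_ite_pos g' hg'c
  set Hs : ℝ → X → X → ℝ := fun t x y =>
    gd (((1-t)*pμ y + t*pν y) * q y x / (((1-t)*pμ x + t*pν x) * q x y)) *
      ((|pν y - pμ y| * ((1-t)*pμ x + t*pν x) + ((1-t)*pμ y + t*pν y) * |pν x - pμ x|) * q y x
        / (((1-t)*pμ x + t*pν x)^2 * q x y)) with hHs_def
  set F : ℝ → X → X → ℝ≥0∞ := fun t x y =>
    ENNReal.ofReal (pρ x) * (ENNReal.ofReal ((V y + V x) * q x y) * ENNReal.ofReal (Hs t x y))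
    with hF_def
  have hmvt : ∀ x y, ENNReal.ofReal |g (hastingsRatio q pμ x y) - g (hastingsRatio q pν x y)|
      ≤ ∫⁻ t in Set.Icc (0:ℝ) 1, ENNReal.ofReal (Hs t x y) := by
    intro x y
    rw [abs_sub_comm]
    have h1 := mvt_bound hg' hg'c hg'nn (hpμpos x) (hpνpos x) (hpμpos y) (hpνpos y)
      (hqpos x y) (hqpos y x)
    have h1' : ENNReal.ofReal |g (hastingsRatio q pν x y) - g (hastingsRatio q pμ x y)|
        ≤ ∫⁻ t in Set.Icc (0:ℝ) 1, ENNReal.ofReal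
          (g' (((1-t)*pμ y + t*pν y) * q y x / (((1-t)*pμ x + t*pν x) * q x y)) *
            ((|pν y - pμ y| * ((1-t)*pμ x + t*pν x) + ((1-t)*pμ y + t*pν y) * |pν x - pμ x|)
              * q y x / (((1-t)*pμ x + t*pν x)^2 * q x y))) := by
      simpa only [hastingsRatio] using h1
    refine h1'.trans (lintegral_mono_ae ((ae_restrict_iff' measurableSet_Icc).mpr
      (Filter.Eventually.of_forall fun t ht => ?_)))
    apply le_of_eq
    congr 1
    have hpos : 0 < ((1-t)*pμ y + t*pν y) * q y x / (((1-t)*pμ x + t*pν x) * q x y) :=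
      div_pos (mul_pos (mix_pos' (hpμpos y) (hpνpos y) ht.1 ht.2) (hqpos y x))
        (mul_pos (mix_pos' (hpμpos x) (hpνpos x) ht.1 ht.2) (hqpos x y))
    rw [hHs_def]
    dsimp only
    rw [hgd_def]
    dsimp only
    rw [if_pos hpos]
  have hyint : ∀ x, Integrable (fun y =>
      (f y - f x) * (g (hastingsRatio q pμ x y) - g (hastingsRatio q pν x y)) * q x y) lam := by
    intro x
    have hA : Integrable (fun y => f y * g (hastingsRatio q pμ x y) * q x y
        - f y * g (hastingsRatio q pν x y) * q x y) lam := (hIyμf x).sub (hIyνf x)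
    have hB1 : Integrable (fun y => f x * (g (hastingsRatio q pμ x y) * q x y)) lam :=
      (hIyμ1 x).const_mul (f x)
    have hB2 : Integrable (fun y => f x * (g (hastingsRatio q pν x y) * q x y)) lam :=
      (hIyν1 x).const_mul (f x)
    have hB : Integrable (fun y => (f x * (g (hastingsRatio q pμ x y) * q x y)
        - f x * (g (hastingsRatio q pν x y) * q x y))) lam := hB1.sub hB2
    have hAB : Integrable (fun y => (f y * g (hastingsRatio q pμ x y) * q x y
        - f y * g (hastingsRatio q pν x y) * q x y)
        - (f x * (g (hastingsRatio q pμ x y) * q x y)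
          - f x * (g (hastingsRatio q pν x y) * q x y))) lam := hA.sub hB
    exact hAB.congr (Filter.Eventually.of_forall fun y => by ring)
  have hstepx : ∀ x, ENNReal.ofReal
      |hastingsKernelFun lam g q pμ x f - hastingsKernelFun lam g q pν x f|
      ≤ ∫⁻ y, ENNReal.ofReal ((V y + V x) * q x y)
          * ∫⁻ t in Set.Icc (0:ℝ) 1, ENNReal.ofReal (Hs t x y) ∂volume ∂lam := by
    intro x
    rw [hker x]
    have h2 : ENNReal.ofReal |∫ y, (f y - f x)
        * (g (hastingsRatio q pμ x y) - g (hastingsRatio q pν x y)) * q x y ∂lam|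
        ≤ ∫⁻ y, ENNReal.ofReal |(f y - f x)
            * (g (hastingsRatio q pμ x y) - g (hastingsRatio q pν x y)) * q x y| ∂lam := by
      rw [← ofReal_integral_eq_lintegral_ofReal (hyint x).abs
        (Filter.Eventually.of_forall fun y => abs_nonneg _)]
      apply ENNReal.ofReal_le_ofReal
      simpa only [Real.norm_eq_abs] using norm_integral_le_integral_norm (μ := lam)
        (fun y => (f y - f x) * (g (hastingsRatio q pμ x y) - g (hastingsRatio q pν x y)) * q x y)
    refine h2.trans (lintegral_mono fun y => ?_)
    have h3 : |(f y - f x) * (g (hastingsRatio q pμ x y) - g (hastingsRatio q pν x y)) * q x y|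
        ≤ ((V y + V x) * q x y)
          * |g (hastingsRatio q pμ x y) - g (hastingsRatio q pν x y)| := by
      rw [abs_mul, abs_mul, abs_of_pos (hqpos x y)]
      have h4 : |f y - f x| ≤ V y + V x := (abs_sub _ _).trans (add_le_add (hfV y) (hfV x))
      calc |f y - f x| * |g (hastingsRatio q pμ x y) - g (hastingsRatio q pν x y)| * q x y
          ≤ (V y + V x) * |g (hastingsRatio q pμ x y) - g (hastingsRatio q pν x y)| * q x y :=
            mul_le_mul_of_nonneg_right (mul_le_mul_of_nonneg_right h4 (abs_nonneg _))
              (hqpos x y).le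
        _ = ((V y + V x) * q x y)
            * |g (hastingsRatio q pμ x y) - g (hastingsRatio q pν x y)| := by ring
    calc ENNReal.ofReal |(f y - f x)
          * (g (hastingsRatio q pμ x y) - g (hastingsRatio q pν x y)) * q x y|
        ≤ ENNReal.ofReal (((V y + V x) * q x y)
            * |g (hastingsRatio q pμ x y) - g (hastingsRatio q pν x y)|) :=
          ENNReal.ofReal_le_ofReal h3
      _ = ENNReal.ofReal ((V y + V x) * q x y)
            * ENNReal.ofReal |g (hastingsRatio q pμ x y) - g (hastingsRatio q pν x y)| :=
          ENNReal.ofReal_mul (mul_nonneg (add_nonneg (hV0 y) (hV0 x)) (hqpos x y).le)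
      _ ≤ _ := mul_le_mul_right (hmvt x y) _
  have hsubint : Integrable (fun x => pρ x * (hastingsKernelFun lam g q pμ x f
      - hastingsKernelFun lam g q pν x f)) lam := by
    have h : Integrable (fun x => pρ x * hastingsKernelFun lam g q pμ x f
        - pρ x * hastingsKernelFun lam g q pν x f) lam := hPμint.sub hPνint
    exact h.congr (Filter.Eventually.of_forall fun x => by ring)
  have hmain1 : ENNReal.ofReal
      |(∫ x, hastingsKernelFun lam g q pμ x f
          ∂(lam.withDensity fun x => ENNReal.ofReal (pρ x)))
        - ∫ x, hastingsKernelFun lam g q pν x f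
          ∂(lam.withDensity fun x => ENNReal.ofReal (pρ x))|
      ≤ ∫⁻ x, ∫⁻ y, ∫⁻ t in Set.Icc (0:ℝ) 1, F t x y ∂volume ∂lam ∂lam := by
    rw [hD]
    have hstep0 : ENNReal.ofReal |∫ x, pρ x * (hastingsKernelFun lam g q pμ x f
        - hastingsKernelFun lam g q pν x f) ∂lam|
        ≤ ∫⁻ x, ENNReal.ofReal |pρ x * (hastingsKernelFun lam g q pμ x f
            - hastingsKernelFun lam g q pν x f)| ∂lam := by
      rw [← ofReal_integral_eq_lintegral_ofReal hsubint.abs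
        (Filter.Eventually.of_forall fun x => abs_nonneg _)]
      apply ENNReal.ofReal_le_ofReal
      simpa only [Real.norm_eq_abs] using norm_integral_le_integral_norm (μ := lam)
        (fun x => pρ x * (hastingsKernelFun lam g q pμ x f - hastingsKernelFun lam g q pν x f))
    refine hstep0.trans (lintegral_mono fun x => ?_)
    rw [abs_mul, abs_of_nonneg (hpρ0 x), ENNReal.ofReal_mul (hpρ0 x)]
    refine le_trans (mul_le_mul_right (hstepx x) _) ?_
    rw [← lintegral_const_mul' _ _ ENNReal.ofReal_ne_top]
    refine lintegral_mono fun y => ?_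
    rw [← lintegral_const_mul' _ _ ENNReal.ofReal_ne_top,
        ← lintegral_const_mul' _ _ ENNReal.ofReal_ne_top]
  have hFm3 : Measurable (fun w : (X × ℝ) × X => F w.1.2 w.1.1 w.2) := by
    have hxw : Measurable (fun w : (X × ℝ) × X => w.1.1) := measurable_fst.comp measurable_fst
    have htw : Measurable (fun w : (X × ℝ) × X => w.1.2) := measurable_snd.comp measurable_fst
    have hyw : Measurable (fun w : (X × ℝ) × X => w.2) := measurable_snd
    have hq1 : Measurable (fun w : (X × ℝ) × X => q w.1.1 w.2) := hqm.comp (hxw.prodMk hyw)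
    have hq2 : Measurable (fun w : (X × ℝ) × X => q w.2 w.1.1) := hqm.comp (hyw.prodMk hxw)
    have hptx : Measurable (fun w : (X × ℝ) × X =>
        (1 - w.1.2) * pμ w.1.1 + w.1.2 * pν w.1.1) :=
      ((measurable_const.sub htw).mul (hpμm.comp hxw)).add (htw.mul (hpνm.comp hxw))
    have hpty : Measurable (fun w : (X × ℝ) × X =>
        (1 - w.1.2) * pμ w.2 + w.1.2 * pν w.2) :=
      ((measurable_const.sub htw).mul (hpμm.comp hyw)).add (htw.mul (hpνm.comp hyw))
    have hrat : Measurable (fun w : (X × ℝ) × X =>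
        ((1 - w.1.2) * pμ w.2 + w.1.2 * pν w.2) * q w.2 w.1.1
          / (((1 - w.1.2) * pμ w.1.1 + w.1.2 * pν w.1.1) * q w.1.1 w.2)) :=
      (hpty.mul hq2).div (hptx.mul hq1)
    have hnum : Measurable (fun w : (X × ℝ) × X =>
        (|pν w.2 - pμ w.2| * ((1 - w.1.2) * pμ w.1.1 + w.1.2 * pν w.1.1)
          + ((1 - w.1.2) * pμ w.2 + w.1.2 * pν w.2) * |pν w.1.1 - pμ w.1.1|) * q w.2 w.1.1
          / (((1 - w.1.2) * pμ w.1.1 + w.1.2 * pν w.1.1) ^ 2 * q w.1.1 w.2)) :=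
      (((((hpνm.comp hyw).sub (hpμm.comp hyw)).abs.mul hptx).add
        (hpty.mul ((hpνm.comp hxw).sub (hpμm.comp hxw)).abs)).mul hq2).div
        ((hptx.pow_const 2).mul hq1)
    have hHsm : Measurable (fun w : (X × ℝ) × X => Hs w.1.2 w.1.1 w.2) := by
      rw [hHs_def]
      exact (hgdm.comp hrat).mul hnum
    rw [hF_def]
    exact ((hpρm.comp hxw).ennreal_ofReal).mul
      ((((hVm.comp hyw).add (hVm.comp hxw)).mul hq1).ennreal_ofReal.mul hHsm.ennreal_ofReal)
  have hswap : (∫⁻ x, ∫⁻ y, ∫⁻ t in Set.Icc (0:ℝ) 1, F t x y ∂volume ∂lam ∂lam)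
      = ∫⁻ t in Set.Icc (0:ℝ) 1, ∫⁻ x, ∫⁻ y, F t x y ∂lam ∂lam ∂volume := by
    have h1 : ∀ x, (∫⁻ y, ∫⁻ t in Set.Icc (0:ℝ) 1, F t x y ∂volume ∂lam)
        = ∫⁻ t in Set.Icc (0:ℝ) 1, ∫⁻ y, F t x y ∂lam ∂volume := by
      intro x
      apply lintegral_lintegral_swap
      exact (hFm3.comp
        ((measurable_const.prodMk measurable_snd).prodMk measurable_fst)).aemeasurable
    rw [lintegral_congr h1]
    apply lintegral_lintegral_swap
    exact (Measurable.lintegral_prod_right'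
      (f := fun (w : (X × ℝ) × X) => F w.1.2 w.1.1 w.2) hFm3).aemeasurable
  set W : ℝ≥0∞ := ∫⁻ w, ENNReal.ofReal (V w * |pν w - pμ w|) ∂lam with hW_def
  have hVd_int : Integrable (fun w => V w * |pν w - pμ w|) lam := by
    have hsum : Integrable (fun w => V w * pμ w + V w * pν w) lam := hVμ.add hVν
    apply Integrable.mono' hsum
    · exact (hVm.mul ((hpνm.sub hpμm).abs)).aestronglyMeasurable
    · refine Filter.Eventually.of_forall fun w => ?_
      rw [Real.norm_eq_abs, abs_of_nonneg (mul_nonneg (hV0 w) (abs_nonneg _))]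
      have habs : |pν w - pμ w| ≤ pμ w + pν w := by
        refine (abs_sub _ _).trans ?_
        rw [abs_of_pos (hpνpos w), abs_of_pos (hpμpos w)]
        linarith
      calc V w * |pν w - pμ w| ≤ V w * (pμ w + pν w) :=
            mul_le_mul_of_nonneg_left habs (hV0 w)
        _ = V w * pμ w + V w * pν w := by ring
  have hWae : 0 ≤ᵐ[lam] fun w => V w * |pν w - pμ w| :=
    Filter.Eventually.of_forall fun w => by
      simpa using mul_nonneg (hV0 w) (abs_nonneg (pν w - pμ w))
  have hWne : W ≠ ⊤ := by
    rw [hW_def, ← ofReal_integral_eq_lintegral_ofReal hVd_int hWae]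
    exact ENNReal.ofReal_ne_top
  have hWle : W ≤ vDistE V (lam.withDensity fun x => ENNReal.ofReal (pμ x))
      (lam.withDensity fun x => ENNReal.ofReal (pν x)) := by
    classical
    set f0 : X → ℝ := fun w => if pμ w ≤ pν w then V w else -V w with hf0_def
    have hf0m : Measurable f0 := Measurable.ite (measurableSet_le hpμm hpνm) hVm hVm.neg
    have hf0V : ∀ w, |f0 w| ≤ V w := by
      intro w; rw [hf0_def]; dsimp only; split
      · rw [abs_of_nonneg (hV0 w)]
      · rw [abs_neg, abs_of_nonneg (hV0 w)]
    have hIμ : Integrable (fun w => pμ w * f0 w) lam := by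
      apply Integrable.mono' hVμ (hpμm.mul hf0m).aestronglyMeasurable
      refine Filter.Eventually.of_forall fun w => ?_
      rw [Real.norm_eq_abs, Pi.mul_apply, abs_mul, abs_of_pos (hpμpos w)]
      calc pμ w * |f0 w| ≤ pμ w * V w := mul_le_mul_of_nonneg_left (hf0V w) (hpμpos w).le
        _ = V w * pμ w := mul_comm _ _
    have hIν : Integrable (fun w => pν w * f0 w) lam := by
      apply Integrable.mono' hVν (hpνm.mul hf0m).aestronglyMeasurable
      refine Filter.Eventually.of_forall fun w => ?_
      rw [Real.norm_eq_abs, Pi.mul_apply, abs_mul, abs_of_pos (hpνpos w)]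
      calc pν w * |f0 w| ≤ pν w * V w := mul_le_mul_of_nonneg_left (hf0V w) (hpνpos w).le
        _ = V w * pν w := mul_comm _ _
    have hkey : (∫ w, f0 w ∂(lam.withDensity fun x => ENNReal.ofReal (pμ x)))
        - (∫ w, f0 w ∂(lam.withDensity fun x => ENNReal.ofReal (pν x)))
        = - ∫ w, V w * |pν w - pμ w| ∂lam := by
      rw [hdens pμ hpμm (fun w => (hpμpos w).le) f0, hdens pν hpνm (fun w => (hpνpos w).le) f0,
        ← integral_sub hIμ hIν, ← integral_neg]
      apply integral_congr_ae
      refine Filter.Eventually.of_forall fun w => ?_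
      rw [hf0_def]; dsimp only; split
      · rename_i hc
        rw [abs_of_nonneg (sub_nonneg.mpr hc)]; ring
      · rename_i hc
        rw [abs_of_neg (sub_neg.mpr (lt_of_not_ge hc))]; ring
    have hWeq : ENNReal.ofReal
        |(∫ w, f0 w ∂(lam.withDensity fun x => ENNReal.ofReal (pμ x)))
          - ∫ w, f0 w ∂(lam.withDensity fun x => ENNReal.ofReal (pν x))| = W := by
      rw [hkey, abs_neg,
        abs_of_nonneg (integral_nonneg fun w => mul_nonneg (hV0 w) (abs_nonneg _)),
        hW_def, ofReal_integral_eq_lintegral_ofReal hVd_int hWae]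
    rw [← hWeq]
    unfold vDistE
    exact le_iSup (fun (φ : {φ : X → ℝ // Measurable φ ∧ ∀ x, |φ x| ≤ V x}) =>
      ENNReal.ofReal
        |(∫ x, φ.1 x ∂(lam.withDensity fun x => ENNReal.ofReal (pμ x)))
          - ∫ x, φ.1 x ∂(lam.withDensity fun x => ENNReal.ofReal (pν x))|) ⟨f0, hf0m, hf0V⟩
  have hpert : ∀ t ∈ Set.Icc (0:ℝ) 1, (∫⁻ x, ∫⁻ y, F t x y ∂lam ∂lam)
      ≤ ((∫⁻ z, ⨆ y, ENNReal.ofReal ((V y + V z) * (pρ z / ((1 - t) * pμ z + t * pν z)) * q y z * g' (hastingsRatio q (fun w => (1 - t) * pμ w + t * pν w) z y) / V y) ∂lam) + ∫⁻ z, ⨆ y, ENNReal.ofReal ((V y + V z) * ((1 - t) * pμ z + t * pν z) * q z y * g' (hastingsRatio q (fun w => (1 - t) * pμ w + t * pν w) y z) * pρ y / (((1 - t) * pμ y + t * pν y) ^ 2 * V y)) ∂lam) * W := by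
    intro t ht
    have hptpos : ∀ w, 0 < (1-t)*pμ w + t*pν w :=
      fun w => mix_pos' (hpμpos w) (hpνpos w) ht.1 ht.2
    have hptm : Measurable (fun w => (1-t) * pμ w + t * pν w) :=
      (hpμm.const_mul (1-t)).add (hpνm.const_mul t)
    have hratpos : ∀ x y : X, 0 < hastingsRatio q (fun w => (1 - t) * pμ w + t * pν w) x y :=
      fun x y => hrpos _ hptpos x y
    have hg'rnn : ∀ x y : X,
        0 ≤ g' (hastingsRatio q (fun w => (1 - t) * pμ w + t * pν w) x y) :=
      fun x y => hg'nn _ (hratpos x y)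
    have hg'm2 : Measurable (fun p : X × X =>
        g' (hastingsRatio q (fun w => (1 - t) * pμ w + t * pν w) p.1 p.2)) :=
      measurable_comp_pos hg'c (hrm2 _ hptm) (fun p => hratpos p.1 p.2)
    have hsplit : ∀ x y : X, F t x y
        = ENNReal.ofReal (V y * |pν y - pμ y|) * ENNReal.ofReal ((V y + V x) * (pρ x / ((1 - t) * pμ x + t * pν x)) * q y x * g' (hastingsRatio q (fun w => (1 - t) * pμ w + t * pν w) x y) / V y)
          + ENNReal.ofReal (V x * |pν x - pμ x|) * ENNReal.ofReal ((V x + V y) * ((1 - t) * pμ y + t * pν y) * q y x * g' (hastingsRatio q (fun w => (1 - t) * pμ w + t * pν w) x y) * pρ x / (((1 - t) * pμ x + t * pν x) ^ 2 * V x)) := by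
      intro x y
      have hraw : hastingsRatio q (fun w => (1 - t) * pμ w + t * pν w) x y
          = ((1-t)*pμ y + t*pν y) * q y x / (((1-t)*pμ x + t*pν x) * q x y) := rfl
      have hHsval : Hs t x y
          = g' (hastingsRatio q (fun w => (1 - t) * pμ w + t * pν w) x y) *
            ((|pν y - pμ y| * ((1-t)*pμ x + t*pν x) + ((1-t)*pμ y + t*pν y) * |pν x - pμ x|)
              * q y x / (((1-t)*pμ x + t*pν x)^2 * q x y)) := by
        rw [hHs_def]; dsimp only
        rw [hgd_def]; dsimp only
        rw [← hraw, if_pos (hratpos x y)]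
      have hE1nn : 0 ≤ (V y + V x) * (pρ x / ((1 - t) * pμ x + t * pν x)) * q y x * g' (hastingsRatio q (fun w => (1 - t) * pμ w + t * pν w) x y) / V y := by
        apply div_nonneg _ (hV0 y)
        exact mul_nonneg (mul_nonneg (mul_nonneg (add_nonneg (hV0 y) (hV0 x))
          (div_nonneg (hpρ0 x) (hptpos x).le)) (hqpos y x).le) (hg'rnn x y)
      have hE2nn : 0 ≤ (V x + V y) * ((1 - t) * pμ y + t * pν y) * q y x * g' (hastingsRatio q (fun w => (1 - t) * pμ w + t * pν w) x y) * pρ x / (((1 - t) * pμ x + t * pν x) ^ 2 * V x) := by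
        apply div_nonneg
        · exact mul_nonneg (mul_nonneg (mul_nonneg (mul_nonneg
            (add_nonneg (hV0 x) (hV0 y)) (hptpos y).le) (hqpos y x).le) (hg'rnn x y)) (hpρ0 x)
        · exact mul_nonneg (pow_nonneg (hptpos x).le 2) (hV0 x)
      have hX1nn : 0 ≤ (V y * |pν y - pμ y|) * ((V y + V x) * (pρ x / ((1 - t) * pμ x + t * pν x)) * q y x * g' (hastingsRatio q (fun w => (1 - t) * pμ w + t * pν w) x y) / V y) :=
        mul_nonneg (mul_nonneg (hV0 y) (abs_nonneg _)) hE1nn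
      have hX2nn : 0 ≤ (V x * |pν x - pμ x|) * ((V x + V y) * ((1 - t) * pμ y + t * pν y) * q y x * g' (hastingsRatio q (fun w => (1 - t) * pμ w + t * pν w) x y) * pρ x / (((1 - t) * pμ x + t * pν x) ^ 2 * V x)) :=
        mul_nonneg (mul_nonneg (hV0 x) (abs_nonneg _)) hE2nn
      have hid : pρ x * (((V y + V x) * q x y) * (Hs t x y))
          = (V y * |pν y - pμ y|) * ((V y + V x) * (pρ x / ((1 - t) * pμ x + t * pν x)) * q y x * g' (hastingsRatio q (fun w => (1 - t) * pμ w + t * pν w) x y) / V y)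
            + (V x * |pν x - pμ x|) * ((V x + V y) * ((1 - t) * pμ y + t * pν y) * q y x * g' (hastingsRatio q (fun w => (1 - t) * pμ w + t * pν w) x y) * pρ x / (((1 - t) * pμ x + t * pν x) ^ 2 * V x)) := by
        rw [hHsval]
        have h1 : ((1:ℝ)-t)*pμ x + t*pν x ≠ 0 := ne_of_gt (hptpos x)
        have h2 : V x ≠ 0 := ne_of_gt (lt_of_lt_of_le zero_lt_one (hV1 x))
        have h3 : V y ≠ 0 := ne_of_gt (lt_of_lt_of_le zero_lt_one (hV1 y))
        have h4 : q x y ≠ 0 := ne_of_gt (hqpos x y)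
        field_simp
        ring
      rw [hF_def]; dsimp only
      rw [← ENNReal.ofReal_mul (mul_nonneg (add_nonneg (hV0 y) (hV0 x)) (hqpos x y).le),
        ← ENNReal.ofReal_mul (hpρ0 x), hid,
        ENNReal.ofReal_add hX1nn hX2nn,
        ENNReal.ofReal_mul (mul_nonneg (hV0 y) (abs_nonneg _)),
        ENNReal.ofReal_mul (mul_nonneg (hV0 x) (abs_nonneg _))]
    have hT1m : Measurable (fun p : X × X =>
        ENNReal.ofReal (V p.2 * |pν p.2 - pμ p.2|) * ENNReal.ofReal
          ((V p.2 + V p.1) * (pρ p.1 / ((1 - t) * pμ p.1 + t * pν p.1)) * q p.2 p.1 *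
            g' (hastingsRatio q (fun w => (1 - t) * pμ w + t * pν w) p.1 p.2) / V p.2)) := by
      apply Measurable.mul (f := fun p : X × X => ENNReal.ofReal (V p.2 * |pν p.2 - pμ p.2|))
      · exact ((hVm.comp measurable_snd).mul
          (((hpνm.comp measurable_snd).sub (hpμm.comp measurable_snd)).abs)).ennreal_ofReal
      · apply Measurable.ennreal_ofReal
        apply Measurable.div _ (hVm.comp measurable_snd)
        exact ((((hVm.comp measurable_snd).add (hVm.comp measurable_fst)).mul
          ((hpρm.comp measurable_fst).div (hptm.comp measurable_fst))).mul
          (hqm.comp (measurable_snd.prodMk measurable_fst))).mul hg'm2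
    have hT2m : Measurable (fun p : X × X =>
        ENNReal.ofReal (V p.1 * |pν p.1 - pμ p.1|) * ENNReal.ofReal
          ((V p.1 + V p.2) * ((1 - t) * pμ p.2 + t * pν p.2) * q p.2 p.1 *
            g' (hastingsRatio q (fun w => (1 - t) * pμ w + t * pν w) p.1 p.2) * pρ p.1 /
            (((1 - t) * pμ p.1 + t * pν p.1) ^ 2 * V p.1))) := by
      apply Measurable.mul (f := fun p : X × X => ENNReal.ofReal (V p.1 * |pν p.1 - pμ p.1|))
      · exact ((hVm.comp measurable_fst).mul
          (((hpνm.comp measurable_fst).sub (hpμm.comp measurable_fst)).abs)).ennreal_ofReal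
      · apply Measurable.ennreal_ofReal
        apply Measurable.div
        · exact (((((hVm.comp measurable_fst).add (hVm.comp measurable_snd)).mul
            (hptm.comp measurable_snd)).mul
            (hqm.comp (measurable_snd.prodMk measurable_fst))).mul hg'm2).mul
            (hpρm.comp measurable_fst)
        · exact ((hptm.comp measurable_fst).pow_const 2).mul (hVm.comp measurable_fst)
    have e1 : (∫⁻ x, ∫⁻ y, F t x y ∂lam ∂lam)
        = (∫⁻ x, ∫⁻ y, ENNReal.ofReal (V y * |pν y - pμ y|)
              * ENNReal.ofReal ((V y + V x) * (pρ x / ((1 - t) * pμ x + t * pν x)) * q y x * g' (hastingsRatio q (fun w => (1 - t) * pμ w + t * pν w) x y) / V y) ∂lam ∂lam)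
          + ∫⁻ x, ∫⁻ y, ENNReal.ofReal (V x * |pν x - pμ x|)
              * ENNReal.ofReal ((V x + V y) * ((1 - t) * pμ y + t * pν y) * q y x * g' (hastingsRatio q (fun w => (1 - t) * pμ w + t * pν w) x y) * pρ x / (((1 - t) * pμ x + t * pν x) ^ 2 * V x)) ∂lam ∂lam := by
      have hT1my : ∀ x : X, Measurable (fun y : X =>
          ENNReal.ofReal (V y * |pν y - pμ y|) * ENNReal.ofReal ((V y + V x) * (pρ x / ((1 - t) * pμ x + t * pν x)) * q y x * g' (hastingsRatio q (fun w => (1 - t) * pμ w + t * pν w) x y) / V y)) :=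
        fun x => hT1m.comp (measurable_const.prodMk measurable_id)
      have hIT1m : Measurable (fun x : X => ∫⁻ y, ENNReal.ofReal (V y * |pν y - pμ y|)
          * ENNReal.ofReal ((V y + V x) * (pρ x / ((1 - t) * pμ x + t * pν x)) * q y x * g' (hastingsRatio q (fun w => (1 - t) * pμ w + t * pν w) x y) / V y) ∂lam) := hT1m.lintegral_prod_right'
      rw [lintegral_congr fun x => lintegral_congr fun y => hsplit x y]
      rw [lintegral_congr fun x => lintegral_add_left (hT1my x) _]
      exact lintegral_add_left hIT1m _
    rw [e1]
    have hWm : Measurable (fun w : X => ENNReal.ofReal (V w * |pν w - pμ w|)) :=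
      (hVm.mul ((hpνm.sub hpμm).abs)).ennreal_ofReal
    have part1 : (∫⁻ x, ∫⁻ y, ENNReal.ofReal (V y * |pν y - pμ y|)
          * ENNReal.ofReal ((V y + V x) * (pρ x / ((1 - t) * pμ x + t * pν x)) * q y x * g' (hastingsRatio q (fun w => (1 - t) * pμ w + t * pν w) x y) / V y) ∂lam ∂lam)
        ≤ W * (∫⁻ z, ⨆ y, ENNReal.ofReal ((V y + V z) * (pρ z / ((1 - t) * pμ z + t * pν z)) * q y z * g' (hastingsRatio q (fun w => (1 - t) * pμ w + t * pν w) z y) / V y) ∂lam) := by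
      rw [lintegral_lintegral_swap hT1m.aemeasurable]
      calc (∫⁻ y, ∫⁻ x, ENNReal.ofReal (V y * |pν y - pμ y|)
            * ENNReal.ofReal ((V y + V x) * (pρ x / ((1 - t) * pμ x + t * pν x)) * q y x * g' (hastingsRatio q (fun w => (1 - t) * pμ w + t * pν w) x y) / V y) ∂lam ∂lam)
          = ∫⁻ y, ENNReal.ofReal (V y * |pν y - pμ y|)
              * ∫⁻ x, ENNReal.ofReal ((V y + V x) * (pρ x / ((1 - t) * pμ x + t * pν x)) * q y x * g' (hastingsRatio q (fun w => (1 - t) * pμ w + t * pν w) x y) / V y) ∂lam ∂lam :=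
            lintegral_congr fun y => lintegral_const_mul' _ _ ENNReal.ofReal_ne_top
        _ ≤ ∫⁻ y, ENNReal.ofReal (V y * |pν y - pμ y|) * (∫⁻ z, ⨆ y, ENNReal.ofReal ((V y + V z) * (pρ z / ((1 - t) * pμ z + t * pν z)) * q y z * g' (hastingsRatio q (fun w => (1 - t) * pμ w + t * pν w) z y) / V y) ∂lam) ∂lam := by
            refine lintegral_mono fun y => mul_le_mul_right (lintegral_mono fun z => ?_) _
            exact le_iSup (fun y' => ENNReal.ofReal ((V y' + V z) * (pρ z / ((1 - t) * pμ z + t * pν z)) * q y' z * g' (hastingsRatio q (fun w => (1 - t) * pμ w + t * pν w) z y') / V y')) y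
        _ = W * (∫⁻ z, ⨆ y, ENNReal.ofReal ((V y + V z) * (pρ z / ((1 - t) * pμ z + t * pν z)) * q y z * g' (hastingsRatio q (fun w => (1 - t) * pμ w + t * pν w) z y) / V y) ∂lam) := by
            rw [hW_def]; exact lintegral_mul_const _ hWm
    have part2 : (∫⁻ x, ∫⁻ y, ENNReal.ofReal (V x * |pν x - pμ x|)
          * ENNReal.ofReal ((V x + V y) * ((1 - t) * pμ y + t * pν y) * q y x * g' (hastingsRatio q (fun w => (1 - t) * pμ w + t * pν w) x y) * pρ x / (((1 - t) * pμ x + t * pν x) ^ 2 * V x)) ∂lam ∂lam)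
        ≤ W * (∫⁻ z, ⨆ y, ENNReal.ofReal ((V y + V z) * ((1 - t) * pμ z + t * pν z) * q z y * g' (hastingsRatio q (fun w => (1 - t) * pμ w + t * pν w) y z) * pρ y / (((1 - t) * pμ y + t * pν y) ^ 2 * V y)) ∂lam) := by
      calc (∫⁻ x, ∫⁻ y, ENNReal.ofReal (V x * |pν x - pμ x|)
            * ENNReal.ofReal ((V x + V y) * ((1 - t) * pμ y + t * pν y) * q y x * g' (hastingsRatio q (fun w => (1 - t) * pμ w + t * pν w) x y) * pρ x / (((1 - t) * pμ x + t * pν x) ^ 2 * V x)) ∂lam ∂lam)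
          = ∫⁻ x, ENNReal.ofReal (V x * |pν x - pμ x|)
              * ∫⁻ y, ENNReal.ofReal ((V x + V y) * ((1 - t) * pμ y + t * pν y) * q y x * g' (hastingsRatio q (fun w => (1 - t) * pμ w + t * pν w) x y) * pρ x / (((1 - t) * pμ x + t * pν x) ^ 2 * V x)) ∂lam ∂lam :=
            lintegral_congr fun x => lintegral_const_mul' _ _ ENNReal.ofReal_ne_top
        _ ≤ ∫⁻ x, ENNReal.ofReal (V x * |pν x - pμ x|) * (∫⁻ z, ⨆ y, ENNReal.ofReal ((V y + V z) * ((1 - t) * pμ z + t * pν z) * q z y * g' (hastingsRatio q (fun w => (1 - t) * pμ w + t * pν w) y z) * pρ y / (((1 - t) * pμ y + t * pν y) ^ 2 * V y)) ∂lam) ∂lam := by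
            refine lintegral_mono fun x => mul_le_mul_right (lintegral_mono fun z => ?_) _
            exact le_iSup (fun y' => ENNReal.ofReal ((V y' + V z) * ((1 - t) * pμ z + t * pν z) * q z y' * g' (hastingsRatio q (fun w => (1 - t) * pμ w + t * pν w) y' z) * pρ y' / (((1 - t) * pμ y' + t * pν y') ^ 2 * V y'))) x
        _ = W * (∫⁻ z, ⨆ y, ENNReal.ofReal ((V y + V z) * ((1 - t) * pμ z + t * pν z) * q z y * g' (hastingsRatio q (fun w => (1 - t) * pμ w + t * pν w) y z) * pρ y / (((1 - t) * pμ y + t * pν y) ^ 2 * V y)) ∂lam) := by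
            rw [hW_def]; exact lintegral_mul_const _ hWm
    calc (∫⁻ x, ∫⁻ y, ENNReal.ofReal (V y * |pν y - pμ y|)
            * ENNReal.ofReal ((V y + V x) * (pρ x / ((1 - t) * pμ x + t * pν x)) * q y x * g' (hastingsRatio q (fun w => (1 - t) * pμ w + t * pν w) x y) / V y) ∂lam ∂lam)
          + (∫⁻ x, ∫⁻ y, ENNReal.ofReal (V x * |pν x - pμ x|)
            * ENNReal.ofReal ((V x + V y) * ((1 - t) * pμ y + t * pν y) * q y x * g' (hastingsRatio q (fun w => (1 - t) * pμ w + t * pν w) x y) * pρ x / (((1 - t) * pμ x + t * pν x) ^ 2 * V x)) ∂lam ∂lam)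
        ≤ W * (∫⁻ z, ⨆ y, ENNReal.ofReal ((V y + V z) * (pρ z / ((1 - t) * pμ z + t * pν z)) * q y z * g' (hastingsRatio q (fun w => (1 - t) * pμ w + t * pν w) z y) / V y) ∂lam) + W * (∫⁻ z, ⨆ y, ENNReal.ofReal ((V y + V z) * ((1 - t) * pμ z + t * pν z) * q z y * g' (hastingsRatio q (fun w => (1 - t) * pμ w + t * pν w) y z) * pρ y / (((1 - t) * pμ y + t * pν y) ^ 2 * V y)) ∂lam) := add_le_add part1 part2
      _ = ((∫⁻ z, ⨆ y, ENNReal.ofReal ((V y + V z) * (pρ z / ((1 - t) * pμ z + t * pν z)) * q y z * g' (hastingsRatio q (fun w => (1 - t) * pμ w + t * pν w) z y) / V y) ∂lam) + ∫⁻ z, ⨆ y, ENNReal.ofReal ((V y + V z) * ((1 - t) * pμ z + t * pν z) * q z y * g' (hastingsRatio q (fun w => (1 - t) * pμ w + t * pν w) y z) * pρ y / (((1 - t) * pμ y + t * pν y) ^ 2 * V y)) ∂lam) * W := by ring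
  calc
    ENNReal.ofReal
      |(∫ x, hastingsKernelFun lam g q pμ x f
          ∂(lam.withDensity fun x => ENNReal.ofReal (pρ x)))
        - ∫ x, hastingsKernelFun lam g q pν x f
          ∂(lam.withDensity fun x => ENNReal.ofReal (pρ x))|
        ≤ ∫⁻ x, ∫⁻ y, ∫⁻ t in Set.Icc (0:ℝ) 1, F t x y ∂volume ∂lam ∂lam := hmain1
    _ = ∫⁻ t in Set.Icc (0:ℝ) 1, ∫⁻ x, ∫⁻ y, F t x y ∂lam ∂lam ∂volume := hswap
    _ ≤ ∫⁻ t in Set.Icc (0:ℝ) 1, ((∫⁻ z, ⨆ y, ENNReal.ofReal ((V y + V z) * (pρ z / ((1 - t) * pμ z + t * pν z)) * q y z * g' (hastingsRatio q (fun w => (1 - t) * pμ w + t * pν w) z y) / V y) ∂lam) + ∫⁻ z, ⨆ y, ENNReal.ofReal ((V y + V z) * ((1 - t) * pμ z + t * pν z) * q z y * g' (hastingsRatio q (fun w => (1 - t) * pμ w + t * pν w) y z) * pρ y / (((1 - t) * pμ y + t * pν y) ^ 2 * V y)) ∂lam) * W ∂volume :=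
        lintegral_mono_ae ((ae_restrict_iff' measurableSet_Icc).mpr
          (Filter.Eventually.of_forall fun t ht => hpert t ht))
    _ = (∫⁻ t in Set.Icc (0:ℝ) 1, ((∫⁻ z, ⨆ y, ENNReal.ofReal ((V y + V z) * (pρ z / ((1 - t) * pμ z + t * pν z)) * q y z * g' (hastingsRatio q (fun w => (1 - t) * pμ w + t * pν w) z y) / V y) ∂lam) + ∫⁻ z, ⨆ y, ENNReal.ofReal ((V y + V z) * ((1 - t) * pμ z + t * pν z) * q z y * g' (hastingsRatio q (fun w => (1 - t) * pμ w + t * pν w) y z) * pρ y / (((1 - t) * pμ y + t * pν y) ^ 2 * V y)) ∂lam) ∂volume) * W :=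
        lintegral_mul_const' _ _ hWne
    _ ≤ _ := mul_le_mul_right hWle _
end
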